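/- arXiv:1612.02642 — 2 statements merged into one kernel-verified Lean document; each statement's English description precedes it below -/
import Mathlib

section
/- The distance between the center and the subtree core of the path-star tree P_{n−g,g} equals: 2^{g−1}−1 if 2^g+1 ≤ n−g and n−g is even; 2^{g−1}−2 if 2^g+1 ≤ n−g and n−g is odd; (n−g−2)/2 if 2^g+1 > n−g and n−g is even; (n−g−3)/2 if 2^g+1 > n−g and n−g is odd. -/
open SimpleGraph

/-- Eccentricity of a vertex: maximum distance to any vertex. -/
noncomputable def ecc {V : Type*} [Fintype V] (G : SimpleGraph V) (v : V) : ℕ :=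
  Finset.univ.sup fun u => G.dist u v

/-- Center: vertices of minimum eccentricity. -/
noncomputable def center {V : Type*} [Fintype V] (G : SimpleGraph V) : Set V :=
  {v | ∀ u, ecc G v ≤ ecc G u}

/-- Number of vertices of the component of `G - v` containing `u`; this equals the
number of edges of the corresponding branch of a tree at `v`. -/
noncomputable def branchSize {V : Type*} (G : SimpleGraph V) (v : V) (u : {x : V // x ≠ v}) : ℕ :=
  Set.ncard {x : {y : V // y ≠ v} | (G.induce {y : V | y ≠ v}).Reachable ⟨u.1, u.2⟩ ⟨x.1, x.2⟩}

/-- Weight of a vertex: maximal number of edges in a branch at `v`. -/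
noncomputable def weight {V : Type*} [Fintype V] [DecidableEq V] (G : SimpleGraph V) (v : V) : ℕ :=
  Finset.univ.sup fun u : {x : V // x ≠ v} => branchSize G v u

/-- Centroid: vertices of minimum weight. -/
noncomputable def centroid {V : Type*} [Fintype V] [DecidableEq V] (G : SimpleGraph V) : Set V :=
  {v | ∀ u, weight G v ≤ weight G u}

/-- Number of subtrees (vertex sets inducing a connected subgraph) containing all of `A`. -/
noncomputable def numSubtreesOn {V : Type*} (G : SimpleGraph V) (A : Set V) : ℕ :=
  Set.ncard {S : Set V | A ⊆ S ∧ (G.induce S).Connected}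

/-- Number of subtrees containing the vertex `v`. -/
noncomputable def numSubtrees {V : Type*} (G : SimpleGraph V) (v : V) : ℕ :=
  numSubtreesOn G {v}

/-- Subtree core: vertices maximizing the number of subtrees containing them. -/
noncomputable def subtreeCore {V : Type*} (G : SimpleGraph V) : Set V :=
  {v | ∀ u, numSubtrees G u ≤ numSubtrees G v}

/-- Distance between two sets of vertices: minimum pairwise distance. -/
noncomputable def setDist {V : Type*} (G : SimpleGraph V) (A B : Set V) : ℕ :=
  sInf {d | ∃ a ∈ A, ∃ b ∈ B, G.dist a b = d}

/-- The path-star tree `P_{n-g,g}`: a path on vertices `0, …, n-g-1` (paper labels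
`1, …, n-g`) with `g` pendant vertices `n-g, …, n-1` attached to vertex `n-g-1`. -/
def pathStar (n g : ℕ) : SimpleGraph (Fin n) :=
  SimpleGraph.fromRel fun i j =>
    (i.val + 1 = j.val ∧ j.val < n - g) ∨ (i.val = n - g - 1 ∧ n - g ≤ j.val)

/-- The tree obtained from `G` by detaching the pendant vertex `y` and attaching it
as a pendant vertex adjacent to `w`. -/
def reattach {V : Type*} (G : SimpleGraph V) (y w : V) : SimpleGraph V :=
  SimpleGraph.fromRel fun a b => (G.Adj a b ∧ a ≠ y ∧ b ≠ y) ∨ (a = y ∧ b = w)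

namespace PSaux

/-- potential function: path vertex `i ↦ i`, pendant `↦ m`. -/
def phi (m : ℕ) {n : ℕ} (v : Fin n) : ℕ := min v.val m

lemma adj_iff {n g m : ℕ} (hm : n = m + g) {u v : Fin n} :
    (pathStar n g).Adj u v ↔ u ≠ v ∧
      ((u.val + 1 = v.val ∧ v.val < m) ∨ (v.val + 1 = u.val ∧ u.val < m) ∨
       (u.val = m - 1 ∧ m ≤ v.val) ∨ (v.val = m - 1 ∧ m ≤ u.val)) := by
  have hng : n - g = m := by omega
  simp only [pathStar, fromRel_adj, hng]
  tauto

lemma adj_phi {n g m : ℕ} (hm : n = m + g) (hm1 : 1 ≤ m) {u v : Fin n}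
    (h : (pathStar n g).Adj u v) : phi m u = phi m v + 1 ∨ phi m v = phi m u + 1 := by
  rw [adj_iff hm] at h
  simp only [phi]
  omega

lemma length_ge_phi {n g m : ℕ} (hm : n = m + g) (hm1 : 1 ≤ m) {u v : Fin n}
    (p : (pathStar n g).Walk u v) : phi m v - phi m u ≤ p.length ∧ phi m u - phi m v ≤ p.length := by
  induction p with
  | nil => simp
  | cons h p ih =>
    rcases adj_phi hm hm1 h with h1 | h1 <;> simp [Walk.length_cons] <;> omega

/-- discrete IVT along a walk -/
lemma walk_ivt {n g m : ℕ} (hm : n = m + g) (hm1 : 1 ≤ m) {u v : Fin n}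
    (p : (pathStar n g).Walk u v) (k : ℕ) (h1 : phi m u ≤ k) (h2 : k ≤ phi m v) :
    ∃ w ∈ p.support, phi m w = k := by
  induction p with
  | @nil x => exact ⟨x, by simp, by omega⟩
  | @cons a b c h p ih =>
    by_cases hk : phi m a = k
    · exact ⟨a, by simp, hk⟩
    · have := adj_phi hm hm1 h
      obtain ⟨w, hw, hwk⟩ := ih (by omega) h2
      exact ⟨w, by simp [hw], hwk⟩

lemma walk_ivt' {n g m : ℕ} (hm : n = m + g) (hm1 : 1 ≤ m) {u v : Fin n}
    (p : (pathStar n g).Walk u v) (k : ℕ) (h1 : phi m v ≤ k) (h2 : k ≤ phi m u) :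
    ∃ w ∈ p.support, phi m w = k := by
  obtain ⟨w, hw, hwk⟩ := walk_ivt hm hm1 p.reverse k h1 h2
  exact ⟨w, by simpa [Walk.support_reverse] using hw, hwk⟩

/-- walk along the path from `a` to `a + d` -/
lemma exists_walk_path {n g m : ℕ} (hm : n = m + g) :
    ∀ (d a : ℕ) (h : a + d < m),
      ∃ p : (pathStar n g).Walk ⟨a, by omega⟩ ⟨a + d, by omega⟩, p.length = d := by
  intro d
  induction d with
  | zero => intro a h; exact ⟨Walk.nil, rfl⟩
  | succ d ih =>
    intro a h
    obtain ⟨p, hp⟩ := ih (a+1) (by omega)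
    have hadj : (pathStar n g).Adj ⟨a, by omega⟩ ⟨a+1, by omega⟩ := by
      rw [adj_iff hm]
      exact ⟨Fin.ne_of_val_ne (by simp <;> omega), Or.inl ⟨by simp, by simp <;> omega⟩⟩
    refine ⟨(Walk.cons hadj p).copy rfl (by apply Fin.ext; simp; omega), by simp [hp]⟩

lemma adj_pend {n g m : ℕ} (hm : n = m + g) (hm1 : 1 ≤ m) {q : Fin n} (hq : m ≤ q.val) :
    (pathStar n g).Adj ⟨m - 1, by omega⟩ q := by
  rw [adj_iff hm]
  refine ⟨by simp [Fin.ext_iff]; omega, by simp <;> omega⟩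


lemma dist_path_path {n g m : ℕ} (hm : n = m + g) {a b : ℕ} (hab : a ≤ b) (hb : b < m) :
    (pathStar n g).dist ⟨a, by omega⟩ ⟨b, by omega⟩ = b - a := by
  obtain ⟨p, hp⟩ := exists_walk_path hm (b - a) a (by omega)
  have hp' : ∃ q : (pathStar n g).Walk (⟨a, by omega⟩ : Fin n) ⟨b, by omega⟩, q.length = b - a :=
    ⟨p.copy rfl (by apply Fin.ext; simp; omega), by simp [hp]⟩
  obtain ⟨q, hq⟩ := hp'
  refine le_antisymm (hq ▸ dist_le q) ?_
  obtain ⟨r, hr⟩ := q.reachable.exists_walk_length_eq_dist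
  have := (length_ge_phi hm (by omega) r).1
  simp only [phi] at this
  omega

lemma dist_path_pend {n g m : ℕ} (hm : n = m + g) {a : ℕ} (ha : a < m) {q : Fin n}
    (hq : m ≤ q.val) : (pathStar n g).dist ⟨a, by omega⟩ q = m - a := by
  obtain ⟨p, hp⟩ := exists_walk_path hm (m - 1 - a) a (by omega)
  have hadj := adj_pend hm (by omega) hq
  have hwalk : ∃ w : (pathStar n g).Walk (⟨a, by omega⟩ : Fin n) q, w.length = m - a := by
    refine ⟨(p.copy rfl (by apply Fin.ext; simp; omega)).append hadj.toWalk, ?_⟩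
    simp [hp]; omega
  obtain ⟨w, hw⟩ := hwalk
  refine le_antisymm (hw ▸ dist_le w) ?_
  obtain ⟨r, hr⟩ := w.reachable.exists_walk_length_eq_dist
  have := (length_ge_phi hm (by omega) r).1
  simp only [phi] at this
  omega

lemma dist_pend_pend {n g m : ℕ} (hm : n = m + g) (hm1 : 1 ≤ m) {p q : Fin n}
    (hp : m ≤ p.val) (hq : m ≤ q.val) (hpq : p ≠ q) : (pathStar n g).dist p q = 2 := by
  have hadj1 := adj_pend hm hm1 hp
  have hadj2 := adj_pend hm hm1 hq
  have hw : ∃ w : (pathStar n g).Walk p q, w.length = 2 := ⟨hadj1.symm.toWalk.append hadj2.toWalk, by simp⟩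
  obtain ⟨w, hw⟩ := hw
  have h1 : (pathStar n g).dist p q ≤ 2 := hw ▸ dist_le w
  have h0 : (pathStar n g).dist p q ≠ 0 := by
    rw [SimpleGraph.dist_ne_zero_iff_ne_and_reachable]
    exact ⟨hpq, w.reachable⟩
  have hne : ¬ (pathStar n g).Adj p q := by
    rw [adj_iff hm]
    rintro ⟨-, h | h | h | h⟩ <;> omega
  have h1' : (pathStar n g).dist p q ≠ 1 := by
    intro hcon; exact hne (SimpleGraph.dist_eq_one_iff_adj.mp hcon)
  omega

lemma dist_le_ecc {V : Type*} [Fintype V] (G : SimpleGraph V) (u v : V) :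
    G.dist u v ≤ ecc G v :=
  Finset.le_sup (f := fun u => G.dist u v) (Finset.mem_univ u)

lemma ecc_path {n g m : ℕ} (hm : n = m + g) (hg1 : 1 ≤ g) {v : Fin n} (ha : v.val < m) :
    ecc (pathStar n g) v = max v.val (m - v.val) := by
  obtain ⟨a, hlt⟩ := v
  simp only [Fin.val_mk] at ha ⊢
  refine le_antisymm ?_ ?_
  · simp only [ecc]
    refine Finset.sup_le fun u _ => ?_
    obtain ⟨b, hb⟩ := u
    rcases lt_or_ge b m with hu | hu
    · rcases le_or_gt b a with h | h
      · rw [dist_path_path hm h ha]; omega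
      · rw [SimpleGraph.dist_comm, dist_path_path hm (le_of_lt h) hu]; omega
    · rw [SimpleGraph.dist_comm, dist_path_pend hm ha hu]; omega
  · have h1 := dist_le_ecc (pathStar n g) ⟨0, by omega⟩ ⟨a, by omega⟩
    have h2 := dist_le_ecc (pathStar n g) ⟨m, by omega⟩ ⟨a, by omega⟩
    rw [dist_path_path hm (Nat.zero_le a) ha] at h1
    rw [SimpleGraph.dist_comm, dist_path_pend hm ha (by simp)] at h2
    omega

lemma ecc_pend {n g m : ℕ} (hm : n = m + g) (hm1 : 3 ≤ m) {q : Fin n} (hq : m ≤ q.val) :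
    ecc (pathStar n g) q = m := by
  refine le_antisymm ?_ ?_
  · simp only [ecc]
    refine Finset.sup_le fun u _ => ?_
    rcases lt_or_ge u.val m with hu | hu
    · obtain ⟨b, hb⟩ := u
      rw [dist_path_pend hm hu hq]; omega
    · rcases eq_or_ne u q with h | h
      · rw [h, SimpleGraph.dist_self]; omega
      · rw [dist_pend_pend hm (by omega) hu hq h]; omega
  · have h1 := dist_le_ecc (pathStar n g) ⟨0, by omega⟩ q
    rw [dist_path_pend hm (by omega) hq] at h1
    omega

lemma center_iff {n g m : ℕ} (hm : n = m + g) (hm3 : 3 ≤ m) (hg1 : 1 ≤ g) {v : Fin n} :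
    v ∈ _root_.center (pathStar n g) ↔ m / 2 ≤ v.val ∧ v.val ≤ (m + 1) / 2 := by
  have hmid : ecc (pathStar n g) ⟨m / 2, by omega⟩ = max (m / 2) (m - m / 2) :=
    ecc_path hm hg1 (by simp; omega)
  constructor
  · intro h
    have hc := h ⟨m / 2, by omega⟩
    rw [hmid] at hc
    rcases lt_or_ge v.val m with hv | hv
    · rw [ecc_path hm hg1 hv] at hc
      omega
    · rw [ecc_pend hm hm3 hv] at hc
      omega
  · intro ⟨h1, h2⟩
    have hv : v.val < m := by omega
    intro u
    rw [ecc_path hm hg1 hv]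
    rcases lt_or_ge u.val m with hu | hu
    · rw [ecc_path hm hg1 hu]
      omega
    · rw [ecc_pend hm hm3 hu]
      omega


/-- interval of path vertices -/
def Iv (n a b : ℕ) : Set (Fin n) := {x | a ≤ x.val ∧ x.val ≤ b}
/-- pendant vertices -/
def Pd (n m : ℕ) : Set (Fin n) := {x | m ≤ x.val}

lemma exists_walk_in {n g : ℕ} {S : Set (Fin n)} {x y : S}
    (h : ((pathStar n g).induce S).Reachable x y) :
    ∃ p : (pathStar n g).Walk x.1 y.1, ∀ w ∈ p.support, w ∈ S := by
  obtain ⟨q⟩ := h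
  refine ⟨q.map (SimpleGraph.Embedding.induce S).toHom, fun w hw => ?_⟩
  replace hw : w ∈ q.support.map (SimpleGraph.Embedding.induce (G := pathStar n g) S).toHom := by
    rw [← Walk.support_map]; exact hw
  rw [List.mem_map] at hw
  obtain ⟨z, _, hz⟩ := hw
  rw [← hz]
  exact z.2

lemma adj_last {n g : ℕ} {x y : Fin n} (p : (pathStar n g).Walk x y) (hxy : x ≠ y) :
    ∃ u ∈ p.support, (pathStar n g).Adj u y := by
  induction p with
  | nil => exact absurd rfl hxy
  | @cons a b c h p ih =>
    by_cases hbc : b = c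
    · exact ⟨a, by simp, hbc ▸ h⟩
    · obtain ⟨u, hu, hadj⟩ := ih hbc
      exact ⟨u, by simp [hu], hadj⟩

lemma reach_seg {n g m : ℕ} (hm : n = m + g) {S : Set (Fin n)} :
    ∀ (d a : ℕ) (h : a + d < m)
      (hsub : ∀ k, a ≤ k → k ≤ a + d → ∀ hk : k < n, (⟨k, hk⟩ : Fin n) ∈ S),
      ((pathStar n g).induce S).Reachable
        ⟨⟨a, by omega⟩, hsub a le_rfl (by omega) _⟩
        ⟨⟨a + d, by omega⟩, hsub (a + d) (by omega) le_rfl _⟩ := by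
  intro d
  induction d with
  | zero => intro a h hsub; rfl
  | succ d ih =>
    intro a h hsub
    have hadj : ((pathStar n g).induce S).Adj
        ⟨⟨a, by omega⟩, hsub a le_rfl (by omega) _⟩
        ⟨⟨a + 1, by omega⟩, hsub (a + 1) (by omega) (by omega) _⟩ := by
      simp only [comap_adj, Function.Embedding.coe_subtype]
      rw [adj_iff hm]
      exact ⟨Fin.ne_of_val_ne (by simp), Or.inl ⟨by simp, by simp; omega⟩⟩
    have hr := ih (a + 1) (by omega) (fun k h1 h2 hk => hsub k (by omega) (by omega) hk)
    have := hadj.reachable.trans hr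
    convert this using 2 <;> · apply Fin.ext; simp; omega

lemma reach_congr {n g : ℕ} {S : Set (Fin n)} {x y x' y' : S} (hx : x = x') (hy : y = y')
    (h : ((pathStar n g).induce S).Reachable x y) :
    ((pathStar n g).induce S).Reachable x' y' := hx ▸ hy ▸ h

/-- reach an arbitrary path vertex of `S` from another, when the whole segment is in `S` -/
lemma reach_seg' {n g m : ℕ} (hm : n = m + g) {S : Set (Fin n)} {x y : S}
    (hy : y.1.val < m) (hxy : x.1.val ≤ y.1.val)
    (hsub : ∀ k, x.1.val ≤ k → k ≤ y.1.val → ∀ hk : k < n, (⟨k, hk⟩ : Fin n) ∈ S) :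
    ((pathStar n g).induce S).Reachable x y := by
  refine reach_congr ?_ ?_ (reach_seg hm (y.1.val - x.1.val) x.1.val (by omega)
    (fun k h1 h2 hk => hsub k h1 (by omega) hk))
  · apply Subtype.ext; apply Fin.ext; simp
  · apply Subtype.ext; apply Fin.ext; simp; omega

lemma conn_interval {n g m : ℕ} (hm : n = m + g) {a b : ℕ} (hab : a ≤ b) (hb : b < m) :
    ((pathStar n g).induce (Iv n a b)).Connected := by
  rw [connected_iff_exists_forall_reachable]
  have ha : (⟨a, by omega⟩ : Fin n) ∈ Iv n a b := ⟨le_rfl, by show a ≤ b; omega⟩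
  refine ⟨⟨⟨a, by omega⟩, ha⟩, fun w => ?_⟩
  have hw1 : a ≤ w.1.val := w.2.1
  have hw2 : w.1.val ≤ b := w.2.2
  refine reach_seg' hm (by omega) (by show a ≤ w.1.val; omega)
    (fun k h1 h2 hk => by
      have h1' : a ≤ k := h1
      exact ⟨h1', le_trans h2 hw2⟩)

lemma conn_broom {n g m : ℕ} (hm : n = m + g) (hm1 : 1 ≤ m) {a : ℕ} (ha : a < m)
    {Q : Set (Fin n)} (hQ : Q ⊆ Pd n m) :
    ((pathStar n g).induce (Iv n a (m - 1) ∪ Q)).Connected := by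
  rw [connected_iff_exists_forall_reachable]
  have hhub : (⟨m - 1, by omega⟩ : Fin n) ∈ Iv n a (m - 1) ∪ Q :=
    Or.inl ⟨by show a ≤ m - 1; omega, le_rfl⟩
  refine ⟨⟨⟨m - 1, by omega⟩, hhub⟩, fun w => ?_⟩
  rcases w.2 with hw | hw
  · have hw1 : a ≤ w.1.val := hw.1
    have hw2 : w.1.val ≤ m - 1 := hw.2
    exact (reach_seg' hm (by show m - 1 < m; omega) hw2
      (fun k h1 h2 hk => by
        have h2' : k ≤ m - 1 := h2
        exact Or.inl ⟨le_trans hw1 h1, h2'⟩)).symm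
  · have hq : m ≤ w.1.val := hQ hw
    have hadj : ((pathStar n g).induce (Iv n a (m - 1) ∪ Q)).Adj
        ⟨⟨m - 1, by omega⟩, hhub⟩ ⟨w.1, w.2⟩ := by
      simp only [comap_adj, Function.Embedding.coe_subtype]
      exact adj_pend hm hm1 hq
    exact hadj.reachable
lemma conn_singleton {n g : ℕ} (q : Fin n) :
    ((pathStar n g).induce {q}).Connected := by
  rw [connected_iff_exists_forall_reachable]
  refine ⟨⟨q, rfl⟩, fun w => ?_⟩
  have : w = ⟨q, rfl⟩ := Subtype.ext w.2
  rw [this]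


lemma seg_sub {n g m : ℕ} (hm : n = m + g) (hm1 : 1 ≤ m) {S : Set (Fin n)}
    (hconn : ((pathStar n g).induce S).Connected) {a c : ℕ} {han : a < n} {hcn : c < n}
    (hcm : c < m) (haS : (⟨a, han⟩ : Fin n) ∈ S) (hcS : (⟨c, hcn⟩ : Fin n) ∈ S)
    {k : ℕ} (hk : k < n) (h1 : a ≤ k) (h2 : k ≤ c) : (⟨k, hk⟩ : Fin n) ∈ S := by
  obtain ⟨p, hp⟩ := exists_walk_in (hconn.preconnected ⟨⟨a, han⟩, haS⟩ ⟨⟨c, hcn⟩, hcS⟩)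
  obtain ⟨w, hw, hwk⟩ := walk_ivt hm hm1 p k (by simp [phi]; omega) (by simp [phi]; omega)
  have hwv : w.val = k := by simp [phi] at hwk; omega
  have : w = ⟨k, hk⟩ := Fin.ext hwv
  rw [← this]
  exact hp w hw

lemma conn_char {n g m : ℕ} (hm : n = m + g) (hm3 : 3 ≤ m) {S : Set (Fin n)} :
    ((pathStar n g).induce S).Connected ↔
      (∃ a b, a ≤ b ∧ b < m ∧ S = Iv n a b) ∨
      (∃ a Q, a < m ∧ Q ⊆ Pd n m ∧ Q.Nonempty ∧ S = Iv n a (m - 1) ∪ Q) ∨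
      (∃ q : Fin n, m ≤ q.val ∧ S = {q}) := by
  constructor
  · intro h
    have hne : S.Nonempty := by
      obtain ⟨⟨x, hx⟩⟩ := h.nonempty
      exact ⟨x, hx⟩
    set A : Set ℕ := {k | k < m ∧ ∃ hk : k < n, (⟨k, hk⟩ : Fin n) ∈ S} with hA
    have hAbdd : BddAbove A := ⟨m, fun k hk => hk.1.le⟩
    by_cases hpend : ∃ q ∈ S, m ≤ q.val
    · obtain ⟨q0, hq0S, hq0⟩ := hpend
      by_cases hsing : S = {q0}
      · exact Or.inr (Or.inr ⟨q0, hq0, hsing⟩)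
      · have hx : ∃ x ∈ S, x ≠ q0 := by
          by_contra hc
          push_neg at hc
          exact hsing (Set.eq_singleton_iff_unique_mem.mpr ⟨hq0S, hc⟩)
        obtain ⟨x, hxS, hxq⟩ := hx
        obtain ⟨p, hp⟩ := exists_walk_in (h.preconnected ⟨x, hxS⟩ ⟨q0, hq0S⟩)
        obtain ⟨u, huS, hadj⟩ := adj_last p (by exact hxq)
        have hadj : (pathStar n g).Adj u q0 := hadj
        have hu : u.val = m - 1 := by
          rw [adj_iff hm] at hadj
          have := u.isLt
          omega
        have hhubS : (⟨m - 1, by omega⟩ : Fin n) ∈ S := by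
          have heq : u = ⟨m - 1, by omega⟩ := Fin.ext (by simp [hu])
          rw [← heq]
          exact hp u huS
        have hAne : A.Nonempty := ⟨m - 1, by omega, by omega, hhubS⟩
        have haA := Nat.sInf_mem hAne
        obtain ⟨ham, han, haS⟩ := haA
        have haub : sInf A ≤ m - 1 := Nat.sInf_le ⟨by omega, by omega, hhubS⟩
        refine Or.inr (Or.inl ⟨sInf A, S ∩ Pd n m, by omega, Set.inter_subset_right,
          ⟨q0, hq0S, hq0⟩, ?_⟩)
        ext z
        constructor
        · intro hz
          rcases lt_or_ge z.val m with hzm | hzm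
          · have hzA : z.val ∈ A := ⟨hzm, z.isLt, by
              have : (⟨z.val, z.isLt⟩ : Fin n) = z := Fin.ext rfl
              rw [this]; exact hz⟩
            exact Or.inl ⟨Nat.sInf_le hzA, by omega⟩
          · exact Or.inr ⟨hz, hzm⟩
        · rintro (hz | hz)
          · obtain ⟨hz1, hz2⟩ := hz
            have := seg_sub hm (by omega) h (han := han) (hcn := by omega) (by omega)
              haS hhubS z.isLt hz1 (by omega)
            have heq : (⟨z.val, z.isLt⟩ : Fin n) = z := Fin.ext rfl
            rw [← heq]
            exact this
          · exact hz.1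
    · push_neg at hpend
      obtain ⟨x0, hx0⟩ := hne
      have hx0m : x0.val < m := hpend x0 hx0
      have hAne : A.Nonempty := ⟨x0.val, hx0m, x0.isLt, by
        have : (⟨x0.val, x0.isLt⟩ : Fin n) = x0 := Fin.ext rfl
        rw [this]; exact hx0⟩
      obtain ⟨ham, han, haS⟩ := Nat.sInf_mem hAne
      obtain ⟨hbm, hbn, hbS⟩ := Nat.sSup_mem hAne hAbdd
      refine Or.inl ⟨sInf A, sSup A, Nat.sInf_le (Nat.sSup_mem hAne hAbdd), hbm, ?_⟩
      ext z
      constructor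
      · intro hz
        have hzm : z.val < m := hpend z hz
        have hzA : z.val ∈ A := ⟨hzm, z.isLt, by
          have : (⟨z.val, z.isLt⟩ : Fin n) = z := Fin.ext rfl
          rw [this]; exact hz⟩
        exact ⟨Nat.sInf_le hzA, le_csSup hAbdd hzA⟩
      · rintro ⟨hz1, hz2⟩
        have := seg_sub hm (by omega) h (han := han) (hcn := hbn) hbm
          haS hbS z.isLt hz1 hz2
        have heq : (⟨z.val, z.isLt⟩ : Fin n) = z := Fin.ext rfl
        rw [← heq]
        exact this
  · rintro (⟨a, b, hab, hb, rfl⟩ | ⟨a, Q, ha, hQ, hQne, rfl⟩ | ⟨q, hq, rfl⟩)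
    · exact conn_interval hm hab hb
    · exact conn_broom hm (by omega) ha hQ
    · exact conn_singleton q


/-- the finset of pendant vertices -/
def PdF (n m : ℕ) : Finset (Fin n) := Finset.univ.filter fun x => m ≤ x.val

lemma pdF_card {n g m : ℕ} (hm : n = m + g) : (PdF n m).card = g := by
  have himg : (PdF n m).image Fin.val = Finset.Ico m n := by
    ext k
    simp only [PdF, Finset.mem_image, Finset.mem_filter, Finset.mem_univ, true_and,
      Finset.mem_Ico]
    constructor
    · rintro ⟨x, hx, rfl⟩
      exact ⟨hx, x.isLt⟩
    · rintro ⟨h1, h2⟩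
      exact ⟨⟨k, h2⟩, h1, rfl⟩
  have := Finset.card_image_of_injective (PdF n m) (Fin.val_injective)
  rw [himg] at this
  rw [← this, Nat.card_Ico]
  omega

lemma mem_PdF {n m : ℕ} {x : Fin n} : x ∈ PdF n m ↔ m ≤ x.val := by
  simp [PdF]

lemma mem_Iv {n a b : ℕ} {x : Fin n} : x ∈ Iv n a b ↔ a ≤ x.val ∧ x.val ≤ b := Iff.rfl

lemma mem_Pd {n m : ℕ} {x : Fin n} : x ∈ Pd n m ↔ m ≤ x.val := Iff.rfl

lemma count_path {n g m : ℕ} (hm : n = m + g) (hm3 : 3 ≤ m) (hg1 : 1 ≤ g) {i : ℕ}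
    (hi : i < m) :
    numSubtrees (pathStar n g) ⟨i, by omega⟩ =
      (i + 1) * (m - i) + (i + 1) * (2 ^ g - 1) := by
  classical
  set v : Fin n := ⟨i, by omega⟩ with hv
  have hvval : v.val = i := rfl
  set A : Set (Set (Fin n)) :=
    (fun p : ℕ × ℕ => Iv n p.1 p.2) '' ↑((Finset.Iic i) ×ˢ (Finset.Icc i (m - 1))) with hA
  set B : Set (Set (Fin n)) :=
    (fun p : ℕ × Finset (Fin n) => Iv n p.1 (m - 1) ∪ ↑p.2) ''
      ↑((Finset.Iic i) ×ˢ ((PdF n m).powerset.erase ∅)) with hB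
  have hset : {S : Set (Fin n) | {v} ⊆ S ∧ ((pathStar n g).induce S).Connected} = A ∪ B := by
    ext S
    simp only [Set.mem_setOf_eq, Set.singleton_subset_iff]
    constructor
    · rintro ⟨hvS, hconn⟩
      rcases (conn_char hm hm3).mp hconn with ⟨a, b, hab, hb, rfl⟩ | ⟨a, Q, ha, hQ, hQne, rfl⟩
        | ⟨q, hq, rfl⟩
      · left
        refine ⟨(a, b), ?_, rfl⟩
        have h1 : a ≤ i := hvS.1
        have h2 : i ≤ b := hvS.2
        simp only [Finset.coe_product, Set.mem_prod, Finset.mem_coe, Finset.mem_Iic,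
          Finset.mem_Icc]
        exact ⟨h1, h2, by omega⟩
      · right
        have hvI : a ≤ i := by
          rcases hvS with h | h
          · exact h.1
          · have := hQ h
            rw [mem_Pd] at this
            omega
        refine ⟨(a, (Set.toFinite Q).toFinset), ?_, ?_⟩
        · simp only [Finset.coe_product, Set.mem_prod, Finset.mem_coe, Finset.mem_Iic,
            Finset.mem_erase, Finset.mem_powerset]
          refine ⟨hvI, ?_, ?_⟩
          · intro hc
            obtain ⟨q0, hq0⟩ := hQne
            have : q0 ∈ (Set.toFinite Q).toFinset := (Set.Finite.mem_toFinset _).mpr hq0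
            rw [hc] at this
            exact absurd this (Finset.notMem_empty q0)
          · intro x hx
            rw [Set.Finite.mem_toFinset] at hx
            exact mem_PdF.mpr (hQ hx)
        · show Iv n a (m - 1) ∪ ↑(Set.toFinite Q).toFinset = Iv n a (m - 1) ∪ Q
          rw [Set.Finite.coe_toFinset]
      · exfalso
        rw [Set.mem_singleton_iff] at hvS
        rw [hvS] at hvval
        omega
    · rintro (⟨⟨a, b⟩, hab, rfl⟩ | ⟨⟨a, F⟩, haF, rfl⟩)
      · simp only [Finset.coe_product, Set.mem_prod, Finset.mem_coe, Finset.mem_Iic,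
          Finset.mem_Icc] at hab
        obtain ⟨h1, h2, h3⟩ := hab
        exact ⟨mem_Iv.mpr ⟨h1, h2⟩, conn_interval hm (by omega) (by omega)⟩
      · simp only [Finset.coe_product, Set.mem_prod, Finset.mem_coe, Finset.mem_Iic,
          Finset.mem_erase, Finset.mem_powerset] at haF
        obtain ⟨h1, h2, h3⟩ := haF
        refine ⟨Or.inl (mem_Iv.mpr ⟨h1, by omega⟩), conn_broom hm (by omega) (by omega) ?_⟩
        intro x hx
        exact mem_Pd.mpr (mem_PdF.mp (h3 hx))
  have hcardA : A.ncard = (i + 1) * (m - i) := by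
    rw [hA, Set.ncard_image_of_injOn, Set.ncard_coe_finset, Finset.card_product,
      Nat.card_Iic, Nat.card_Icc]
    · have : m - 1 + 1 - i = m - i := by omega
      rw [this]
    · rintro ⟨a, b⟩ hab ⟨a', b'⟩ hab' heq
      simp only [Finset.coe_product, Set.mem_prod, Finset.mem_coe, Finset.mem_Iic,
        Finset.mem_Icc] at hab hab'
      obtain ⟨h1, h2, h3⟩ := hab
      obtain ⟨h1', h2', h3'⟩ := hab'
      have heq' : Iv n a b = Iv n a' b' := heq
      have ea : a = a' := by
        have m1 : (⟨a, by omega⟩ : Fin n) ∈ Iv n a b :=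
          mem_Iv.mpr (show a ≤ a ∧ a ≤ b from ⟨le_rfl, by omega⟩)
        have m2 : (⟨a', by omega⟩ : Fin n) ∈ Iv n a' b' :=
          mem_Iv.mpr (show a' ≤ a' ∧ a' ≤ b' from ⟨le_rfl, by omega⟩)
        rw [heq'] at m1; rw [← heq'] at m2
        have m1' : a' ≤ a ∧ a ≤ b' := m1
        have m2' : a ≤ a' ∧ a' ≤ b := m2
        omega
      have eb : b = b' := by
        have m1 : (⟨b, by omega⟩ : Fin n) ∈ Iv n a b :=
          mem_Iv.mpr (show a ≤ b ∧ b ≤ b from ⟨by omega, le_rfl⟩)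
        have m2 : (⟨b', by omega⟩ : Fin n) ∈ Iv n a' b' :=
          mem_Iv.mpr (show a' ≤ b' ∧ b' ≤ b' from ⟨by omega, le_rfl⟩)
        rw [heq'] at m1; rw [← heq'] at m2
        have m1' : a' ≤ b ∧ b ≤ b' := m1
        have m2' : a ≤ b' ∧ b' ≤ b := m2
        omega
      simp [ea, eb]
  have hcardB : B.ncard = (i + 1) * (2 ^ g - 1) := by
    rw [hB, Set.ncard_image_of_injOn, Set.ncard_coe_finset, Finset.card_product,
      Nat.card_Iic, Finset.card_erase_of_mem (Finset.empty_mem_powerset _),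
      Finset.card_powerset, pdF_card hm]
    · rintro ⟨a, F⟩ haF ⟨a', F'⟩ haF' heq
      simp only [Finset.coe_product, Set.mem_prod, Finset.mem_coe, Finset.mem_Iic,
        Finset.mem_erase, Finset.mem_powerset] at haF haF'
      obtain ⟨h1, h2, h3⟩ := haF
      obtain ⟨h1', h2', h3'⟩ := haF'
      have heq' : Iv n a (m - 1) ∪ ↑F = Iv n a' (m - 1) ∪ ↑F' := heq
      have ea : a = a' := by
        have m1 : (⟨a, by omega⟩ : Fin n) ∈ Iv n a (m - 1) ∪ ↑F :=
          Or.inl (mem_Iv.mpr (show a ≤ a ∧ a ≤ m - 1 from ⟨le_rfl, by omega⟩))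
        have m2 : (⟨a', by omega⟩ : Fin n) ∈ Iv n a' (m - 1) ∪ ↑F' :=
          Or.inl (mem_Iv.mpr (show a' ≤ a' ∧ a' ≤ m - 1 from ⟨le_rfl, by omega⟩))
        rw [heq'] at m1; rw [← heq'] at m2
        rcases m1 with m1 | m1
        · rcases m2 with m2 | m2
          · have m1' : a' ≤ a ∧ a ≤ m - 1 := m1
            have m2' : a ≤ a' ∧ a' ≤ m - 1 := m2
            omega
          · have h4 : m ≤ a' := mem_PdF.mp (h3 m2)
            omega
        · have h4 : m ≤ a := mem_PdF.mp (h3' m1)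
          omega
      have eF : F = F' := by
        ext x
        constructor
        · intro hx
          have hxm := mem_PdF.mp (h3 hx)
          have : x ∈ Iv n a (m - 1) ∪ ↑F := Or.inr hx
          rw [heq'] at this
          rcases this with hc | hc
          · rw [mem_Iv] at hc; omega
          · exact hc
        · intro hx
          have hxm := mem_PdF.mp (h3' hx)
          have : x ∈ Iv n a' (m - 1) ∪ ↑F' := Or.inr hx
          rw [← heq'] at this
          rcases this with hc | hc
          · rw [mem_Iv] at hc; omega
          · exact hc
      simp [ea, eF]
  have hdisj : Disjoint A B := by
    rw [Set.disjoint_left]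
    rintro S ⟨⟨a, b⟩, hab, rfl⟩ ⟨⟨a', F'⟩, haF', heq⟩
    simp only [Finset.coe_product, Set.mem_prod, Finset.mem_coe, Finset.mem_Iic,
      Finset.mem_Icc] at hab
    simp only [Finset.coe_product, Set.mem_prod, Finset.mem_coe, Finset.mem_Iic,
      Finset.mem_erase, Finset.mem_powerset] at haF'
    obtain ⟨-, -, h3⟩ := hab
    obtain ⟨-, hne, hsub⟩ := haF'
    obtain ⟨q0, hq0⟩ := Finset.nonempty_iff_ne_empty.mpr hne
    have heq' : Iv n a' (m - 1) ∪ ↑F' = Iv n a b := heq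
    have : q0 ∈ Iv n a b := by
      rw [← heq']
      exact Or.inr hq0
    rw [mem_Iv] at this
    have := mem_PdF.mp (hsub hq0)
    omega
  rw [numSubtrees, numSubtreesOn, hset,
    Set.ncard_union_eq hdisj (Set.Finite.image _ (Finset.finite_toSet _))
      (Set.Finite.image _ (Finset.finite_toSet _)), hcardA, hcardB]


lemma count_pend {n g m : ℕ} (hm : n = m + g) (hm3 : 3 ≤ m) (hg1 : 1 ≤ g) {q : Fin n}
    (hq : m ≤ q.val) :
    numSubtrees (pathStar n g) q = 1 + m * 2 ^ (g - 1) := by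
  classical
  set B : Set (Set (Fin n)) :=
    (fun p : ℕ × Finset (Fin n) => Iv n p.1 (m - 1) ∪ ↑(insert q p.2)) ''
      ↑((Finset.range m) ×ˢ ((PdF n m).erase q).powerset) with hB
  have hset : {S : Set (Fin n) | {q} ⊆ S ∧ ((pathStar n g).induce S).Connected} =
      {({q} : Set (Fin n))} ∪ B := by
    ext S
    simp only [Set.mem_setOf_eq, Set.singleton_subset_iff]
    constructor
    · rintro ⟨hqS, hconn⟩
      rcases (conn_char hm hm3).mp hconn with ⟨a, b, hab, hb, rfl⟩ | ⟨a, Q, ha, hQ, hQne, rfl⟩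
        | ⟨q', hq', rfl⟩
      · exfalso
        have := (mem_Iv.mp hqS).2
        omega
      · right
        have hqQ : q ∈ Q := by
          rcases hqS with h | h
          · have := (mem_Iv.mp h).2; omega
          · exact h
        set QF := (Set.toFinite Q).toFinset with hQF
        have hqQF : q ∈ QF := (Set.Finite.mem_toFinset _).mpr hqQ
        refine ⟨(a, QF.erase q), ?_, ?_⟩
        · simp only [Finset.coe_product, Set.mem_prod, Finset.mem_coe, Finset.mem_range,
            Finset.mem_powerset]
          refine ⟨ha, fun x hx => ?_⟩
          rw [Finset.mem_erase] at hx ⊢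
          refine ⟨hx.1, mem_PdF.mpr ?_⟩
          have := (Set.Finite.mem_toFinset _).mp hx.2
          exact hQ this
        · show Iv n a (m - 1) ∪ ↑(insert q (QF.erase q)) = Iv n a (m - 1) ∪ Q
          rw [Finset.insert_erase hqQF, hQF, Set.Finite.coe_toFinset]
      · left
        rw [Set.mem_singleton_iff] at hqS
        rw [hqS]
        rfl
    · rintro (rfl | ⟨⟨a, F⟩, haF, rfl⟩)
      · exact ⟨rfl, conn_singleton q⟩
      · simp only [Finset.coe_product, Set.mem_prod, Finset.mem_coe, Finset.mem_range,
          Finset.mem_powerset] at haF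
        obtain ⟨h1, h2⟩ := haF
        refine ⟨Or.inr (by simp), conn_broom hm (by omega) h1 ?_⟩
        intro x hx
        rw [Finset.coe_insert, Set.mem_insert_iff] at hx
        rcases hx with rfl | hx
        · exact mem_Pd.mpr hq
        · have := h2 hx
          rw [Finset.mem_erase] at this
          exact mem_Pd.mpr (mem_PdF.mp this.2)
  have hcardB : B.ncard = m * 2 ^ (g - 1) := by
    rw [hB, Set.ncard_image_of_injOn, Set.ncard_coe_finset, Finset.card_product,
      Finset.card_range, Finset.card_powerset,
      Finset.card_erase_of_mem (mem_PdF.mpr hq), pdF_card hm]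
    rintro ⟨a, F⟩ haF ⟨a', F'⟩ haF' heq
    simp only [Finset.coe_product, Set.mem_prod, Finset.mem_coe, Finset.mem_range,
      Finset.mem_powerset] at haF haF'
    obtain ⟨h1, h2⟩ := haF
    obtain ⟨h1', h2'⟩ := haF'
    have heq' : Iv n a (m - 1) ∪ ↑(insert q F) = Iv n a' (m - 1) ∪ ↑(insert q F') := heq
    have hFP : ∀ x ∈ F, m ≤ x.val := fun x hx => mem_PdF.mp (Finset.mem_erase.mp (h2 hx)).2
    have hFP' : ∀ x ∈ F', m ≤ x.val := fun x hx => mem_PdF.mp (Finset.mem_erase.mp (h2' hx)).2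
    have ea : a = a' := by
      have m1 : (⟨a, by omega⟩ : Fin n) ∈ Iv n a (m - 1) ∪ ↑(insert q F) :=
        Or.inl (mem_Iv.mpr (show a ≤ a ∧ a ≤ m - 1 from ⟨le_rfl, by omega⟩))
      have m2 : (⟨a', by omega⟩ : Fin n) ∈ Iv n a' (m - 1) ∪ ↑(insert q F') :=
        Or.inl (mem_Iv.mpr (show a' ≤ a' ∧ a' ≤ m - 1 from ⟨le_rfl, by omega⟩))
      rw [heq'] at m1; rw [← heq'] at m2
      rcases m1 with m1 | m1
      · rcases m2 with m2 | m2
        · have m1' : a' ≤ a ∧ a ≤ m - 1 := m1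
          have m2' : a ≤ a' ∧ a' ≤ m - 1 := m2
          omega
        · rw [Finset.coe_insert, Set.mem_insert_iff] at m2
          rcases m2 with m2 | m2
          · have : q.val = a' := by rw [← m2]
            omega
          · have h4 : m ≤ a' := hFP _ m2
            omega
      · rw [Finset.coe_insert, Set.mem_insert_iff] at m1
        rcases m1 with m1 | m1
        · have : q.val = a := by rw [← m1]
          omega
        · have h4 : m ≤ a := hFP' _ m1
          omega
    have eF : F = F' := by
      have hqF : q ∉ F := fun hc => (Finset.mem_erase.mp (h2 hc)).1 rfl
      have hqF' : q ∉ F' := fun hc => (Finset.mem_erase.mp (h2' hc)).1 rfl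
      ext x
      constructor
      · intro hx
        have hxm := hFP x hx
        have hxq : x ≠ q := fun hc => hqF (hc ▸ hx)
        have : x ∈ Iv n a (m - 1) ∪ ↑(insert q F) := Or.inr (by simp [hx])
        rw [heq'] at this
        rcases this with hc | hc
        · have := (mem_Iv.mp hc).2; omega
        · rw [Finset.coe_insert, Set.mem_insert_iff] at hc
          rcases hc with hc | hc
          · exact absurd hc hxq
          · exact hc
      · intro hx
        have hxm := hFP' x hx
        have hxq : x ≠ q := fun hc => hqF' (hc ▸ hx)
        have : x ∈ Iv n a' (m - 1) ∪ ↑(insert q F') := Or.inr (by simp [hx])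
        rw [← heq'] at this
        rcases this with hc | hc
        · have := (mem_Iv.mp hc).2; omega
        · rw [Finset.coe_insert, Set.mem_insert_iff] at hc
          rcases hc with hc | hc
          · exact absurd hc hxq
          · exact hc
    simp [ea, eF]
  have hdisj : Disjoint {({q} : Set (Fin n))} B := by
    rw [Set.disjoint_left]
    rintro S hS ⟨⟨a, F⟩, haF, heq⟩
    rw [Set.mem_singleton_iff] at hS
    simp only [Finset.coe_product, Set.mem_prod, Finset.mem_coe, Finset.mem_range,
      Finset.mem_powerset] at haF
    have heq' : Iv n a (m - 1) ∪ ↑(insert q F) = S := heq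
    have hhub : (⟨m - 1, by omega⟩ : Fin n) ∈ S := by
      rw [← heq']
      exact Or.inl (mem_Iv.mpr (show a ≤ m - 1 ∧ m - 1 ≤ m - 1 from ⟨by omega, le_rfl⟩))
    rw [hS, Set.mem_singleton_iff] at hhub
    have : m - 1 = q.val := congrArg Fin.val hhub
    omega
  rw [numSubtrees, numSubtreesOn, hset,
    Set.ncard_union_eq hdisj (Set.finite_singleton _)
      (Set.Finite.image _ (Finset.finite_toSet _)), hcardB, Set.ncard_singleton]


/-- subtree count at path vertex `i` -/
def Nf (g m i : ℕ) : ℕ := (i + 1) * (m - i) + (i + 1) * (2 ^ g - 1)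

lemma Nf_cast {g m i : ℕ} (hi : i < m) :
    (Nf g m i : ℤ) = ((i : ℤ) + 1) * ((m : ℤ) + 2 ^ g - 1 - i) := by
  have h1 : (1 : ℕ) ≤ 2 ^ g := Nat.one_le_two_pow
  have e1 : ((m - i : ℕ) : ℤ) = (m : ℤ) - i := by omega
  have e2 : ((2 ^ g - 1 : ℕ) : ℤ) = (2 ^ g : ℕ) - 1 := by omega
  rw [Nf]
  push_cast [e1, e2]
  ring

lemma two_pow_split (g : ℕ) (hg1 : 1 ≤ g) : 2 ^ g = 2 * 2 ^ (g - 1) := by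
  have h : g - 1 + 1 = g := by omega
  conv_lhs => rw [← h, pow_succ]
  omega

lemma pend_lt_Nf {g m : ℕ} (hm3 : 3 ≤ m) (hg1 : 1 ≤ g) :
    1 + m * 2 ^ (g - 1) < Nf g m (m - 1) := by
  have h1 : (1 : ℕ) ≤ 2 ^ (g - 1) := Nat.one_le_two_pow
  have hpow := two_pow_split g hg1
  rw [Nf]
  have e1 : m - 1 + 1 = m := by omega
  have e2 : m - (m - 1) = 1 := by omega
  rw [e1, e2]
  have e3 : 2 ^ g - 1 = 2 ^ (g - 1) + (2 ^ (g - 1) - 1) := by omega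
  rw [e3, Nat.mul_add]
  omega

lemma numSubtrees_path_val {n g m : ℕ} (hm : n = m + g) (hm3 : 3 ≤ m) (hg1 : 1 ≤ g)
    {v : Fin n} (hv : v.val < m) :
    numSubtrees (pathStar n g) v = Nf g m v.val := by
  have hveq : v = ⟨v.val, by omega⟩ := Fin.ext rfl
  rw [hveq, count_path hm hm3 hg1 hv, Nf]

lemma core_iff' {n g m : ℕ} (hm : n = m + g) (hm3 : 3 ≤ m) (hg1 : 1 ≤ g) {v : Fin n} :
    v ∈ subtreeCore (pathStar n g) ↔
      v.val < m ∧ ∀ j, j < m → Nf g m j ≤ Nf g m v.val := by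
  have hNm := pend_lt_Nf (g := g) hm3 hg1
  constructor
  · intro h
    have hv : v.val < m := by
      by_contra hc
      push_neg at hc
      have h1 := h ⟨m - 1, by omega⟩
      rw [numSubtrees_path_val hm hm3 hg1 (by show m - 1 < m; omega)] at h1
      rw [count_pend hm hm3 hg1 hc] at h1
      have : (⟨m - 1, by omega⟩ : Fin n).val = m - 1 := rfl
      rw [this] at h1
      omega
    refine ⟨hv, fun j hj => ?_⟩
    have h1 := h ⟨j, by omega⟩
    rw [numSubtrees_path_val hm hm3 hg1 (by show j < m; omega),
      numSubtrees_path_val hm hm3 hg1 hv] at h1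
    have : (⟨j, by omega⟩ : Fin n).val = j := rfl
    rw [this] at h1
    exact h1
  · rintro ⟨hv, hmax⟩
    intro u
    rw [numSubtrees_path_val hm hm3 hg1 hv]
    rcases lt_or_ge u.val m with hu | hu
    · rw [numSubtrees_path_val hm hm3 hg1 hu]
      exact hmax u.val hu
    · rw [count_pend hm hm3 hg1 hu]
      have := hmax (m - 1) (by omega)
      omega


lemma cast_two_pow (g : ℕ) : ((2 ^ g : ℕ) : ℤ) = (2 : ℤ) ^ g := by push_cast; ring

lemma core_small {n g m : ℕ} (hm : n = m + g) (hm3 : 3 ≤ m) (hg1 : 1 ≤ g)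
    (hsmall : m ≤ 2 ^ g) {v : Fin n} :
    v ∈ subtreeCore (pathStar n g) ↔ m - 1 ≤ v.val ∧ v.val ≤ m - 1 := by
  have hcast := cast_two_pow g
  have hstrict : ∀ j, j < m - 1 → Nf g m j < Nf g m (m - 1) := by
    intro j hj
    have key : (Nf g m j : ℤ) < (Nf g m (m - 1) : ℤ) := by
      rw [Nf_cast (show j < m by omega), Nf_cast (show m - 1 < m by omega)]
      have ec : ((m - 1 : ℕ) : ℤ) = (m : ℤ) - 1 := by omega
      rw [ec]
      have f1 : (0 : ℤ) < (m : ℤ) - 1 - j := by omega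
      have f2 : (0 : ℤ) < (2 : ℤ) ^ g - 1 - j := by omega
      nlinarith [mul_pos f1 f2]
    exact_mod_cast key
  rw [core_iff' hm hm3 hg1]
  constructor
  · rintro ⟨hv, hmax⟩
    have : v.val = m - 1 := by
      by_contra hc
      have h1 := hmax (m - 1) (by omega)
      have h2 := hstrict v.val (by omega)
      omega
    omega
  · rintro ⟨h1, h2⟩
    have hvv : v.val = m - 1 := by omega
    refine ⟨by omega, fun j hj => ?_⟩
    rw [hvv]
    rcases eq_or_lt_of_le (show j ≤ m - 1 by omega) with rfl | hlt
    · exact le_rfl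
    · exact (hstrict j hlt).le

lemma core_big_even {n g m : ℕ} (hm : n = m + g) (hm3 : 3 ≤ m) (hg1 : 1 ≤ g)
    (hbig : 2 ^ g + 1 ≤ m) (heven : Even m) {v : Fin n} :
    v ∈ subtreeCore (pathStar n g) ↔
      (m + 2 ^ g - 2) / 2 ≤ v.val ∧ v.val ≤ (m + 2 ^ g - 2) / 2 := by
  have hcast := cast_two_pow g
  have hpow := two_pow_split g hg1
  obtain ⟨k, hk⟩ := heven
  set c := (m + 2 ^ g - 2) / 2 with hc
  have h2c : 2 * c = m + 2 ^ g - 2 := by omega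
  have hcm : c < m := by omega
  have hstrict : ∀ j, j < m → j ≠ c → Nf g m j < Nf g m c := by
    intro j hj hjc
    have key : (Nf g m j : ℤ) < (Nf g m c : ℤ) := by
      rw [Nf_cast hj, Nf_cast hcm]
      have h2cZ : 2 * (c : ℤ) = (m : ℤ) + (2 : ℤ) ^ g - 2 := by omega
      rcases lt_or_gt_of_ne hjc with hlt | hgt
      · have f1 : (0 : ℤ) < (c : ℤ) - j := by omega
        nlinarith [mul_pos f1 f1]
      · have f1 : (0 : ℤ) < (j : ℤ) - c := by omega
        nlinarith [mul_pos f1 f1]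
    exact_mod_cast key
  rw [core_iff' hm hm3 hg1]
  constructor
  · rintro ⟨hv, hmax⟩
    have : v.val = c := by
      by_contra hc'
      have h1 := hmax c hcm
      have h2 := hstrict v.val hv hc'
      omega
    omega
  · rintro ⟨h1, h2⟩
    have hvv : v.val = c := by omega
    refine ⟨by omega, fun j hj => ?_⟩
    rw [hvv]
    rcases eq_or_ne j c with rfl | hne
    · exact le_rfl
    · exact (hstrict j hj hne).le

lemma core_big_odd {n g m : ℕ} (hm : n = m + g) (hm3 : 3 ≤ m) (hg2 : 2 ≤ g)
    (hbig : 2 ^ g + 1 ≤ m) (hodd : Odd m) {v : Fin n} :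
    v ∈ subtreeCore (pathStar n g) ↔
      (m + 2 ^ g - 3) / 2 ≤ v.val ∧ v.val ≤ (m + 2 ^ g - 3) / 2 + 1 := by
  have hcast := cast_two_pow g
  have hpow := two_pow_split g (by omega)
  obtain ⟨k, hk⟩ := hodd
  set c := (m + 2 ^ g - 3) / 2 with hc
  have h2c : 2 * c = m + 2 ^ g - 3 := by omega
  have hcm : c + 1 < m := by omega
  have h2cZ : 2 * (c : ℤ) = (m : ℤ) + (2 : ℤ) ^ g - 3 := by omega
  have heqN : Nf g m c = Nf g m (c + 1) := by
    have key : (Nf g m c : ℤ) = (Nf g m (c + 1) : ℤ) := by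
      rw [Nf_cast (show c < m by omega), Nf_cast hcm]
      push_cast
      linear_combination h2cZ
    exact_mod_cast key
  have hstrict : ∀ j, j < m → j ≠ c → j ≠ c + 1 → Nf g m j < Nf g m c := by
    intro j hj hjc hjc1
    have key : (Nf g m j : ℤ) < (Nf g m c : ℤ) := by
      rw [Nf_cast hj, Nf_cast (show c < m by omega)]
      rcases lt_or_gt_of_ne hjc with hlt | hgt
      · have f1 : (0 : ℤ) < (c : ℤ) - j := by omega
        have f2 : (0 : ℤ) < (c : ℤ) + 1 - j := by omega
        nlinarith [mul_pos f1 f2]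
      · have f1 : (0 : ℤ) < (j : ℤ) - c := by omega
        have f2 : (0 : ℤ) < (j : ℤ) - c - 1 := by omega
        nlinarith [mul_pos f1 f2]
    exact_mod_cast key
  rw [core_iff' hm hm3 (by omega)]
  constructor
  · rintro ⟨hv, hmax⟩
    have : c ≤ v.val ∧ v.val ≤ c + 1 := by
      by_contra hc'
      have hne1 : v.val ≠ c := by omega
      have hne2 : v.val ≠ c + 1 := by omega
      have h1 := hmax c (by omega)
      have h2 := hstrict v.val hv hne1 hne2
      omega
    exact this
  · rintro ⟨h1, h2⟩
    have hNv : Nf g m v.val = Nf g m c := by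
      rcases eq_or_ne v.val c with he | hne
      · rw [he]
      · have : v.val = c + 1 := by omega
        rw [this, ← heqN]
    refine ⟨by omega, fun j hj => ?_⟩
    rw [hNv]
    rcases eq_or_ne j c with rfl | hne
    · exact le_rfl
    · rcases eq_or_ne j (c + 1) with rfl | hne1
      · exact le_of_eq heqN.symm
      · exact (hstrict j hj hne hne1).le


lemma dist_path_vals {n g m : ℕ} (hm : n = m + g) {x y : Fin n} (hy : y.val < m)
    (hxy : x.val ≤ y.val) : (pathStar n g).dist x y = y.val - x.val := by
  obtain ⟨a, ha⟩ := x
  obtain ⟨b, hb⟩ := y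
  exact dist_path_path hm hxy hy

lemma setDist_formula {n g m : ℕ} (hm : n = m + g) (hm3 : 3 ≤ m) (hg1 : 1 ≤ g)
    {c₁ c₂ : ℕ} (hc1 : (m + 1) / 2 ≤ c₁) (hc12 : c₁ ≤ c₂) (hc2m : c₂ < m)
    (hcore : ∀ v : Fin n, v ∈ subtreeCore (pathStar n g) ↔ c₁ ≤ v.val ∧ v.val ≤ c₂) :
    setDist (pathStar n g) (_root_.center (pathStar n g)) (subtreeCore (pathStar n g)) =
      c₁ - (m + 1) / 2 := by
  have ha : (⟨(m + 1) / 2, by omega⟩ : Fin n) ∈ _root_.center (pathStar n g) :=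
    (center_iff hm hm3 hg1).mpr ⟨show m / 2 ≤ (m + 1) / 2 by omega, le_rfl⟩
  have hb : (⟨c₁, by omega⟩ : Fin n) ∈ subtreeCore (pathStar n g) :=
    (hcore _).mpr ⟨le_rfl, show c₁ ≤ c₂ from hc12⟩
  have hdab : (pathStar n g).dist ⟨(m + 1) / 2, by omega⟩ ⟨c₁, by omega⟩ =
      c₁ - (m + 1) / 2 :=
    dist_path_vals hm (show c₁ < m by omega) hc1
  unfold setDist
  apply le_antisymm
  · exact Nat.sInf_le ⟨_, ha, _, hb, hdab⟩
  · have hne : {d | ∃ a ∈ _root_.center (pathStar n g), ∃ b ∈ subtreeCore (pathStar n g),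
        (pathStar n g).dist a b = d}.Nonempty := ⟨c₁ - (m + 1) / 2, ⟨_, ha, _, hb, hdab⟩⟩
    refine le_csInf hne ?_
    rintro d ⟨a, haC, b, hbK, rfl⟩
    have haI := (center_iff hm hm3 hg1).mp haC
    have hbI := (hcore b).mp hbK
    rw [dist_path_vals hm (show b.val < m by omega) (by omega)]
    omega

theorem main (n g : ℕ) (hn : 5 ≤ n) (hg2 : 2 ≤ g) (hg : g ≤ n - 3) :
    (2 ^ g + 1 ≤ n - g →
      (Even (n - g) → setDist (pathStar n g) (_root_.center (pathStar n g))
          (subtreeCore (pathStar n g)) = 2 ^ (g - 1) - 1) ∧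
      (Odd (n - g) → setDist (pathStar n g) (_root_.center (pathStar n g))
          (subtreeCore (pathStar n g)) = 2 ^ (g - 1) - 2)) ∧
    (n - g < 2 ^ g + 1 →
      (Even (n - g) → setDist (pathStar n g) (_root_.center (pathStar n g))
          (subtreeCore (pathStar n g)) = (n - g - 2) / 2) ∧
      (Odd (n - g) → setDist (pathStar n g) (_root_.center (pathStar n g))
          (subtreeCore (pathStar n g)) = (n - g - 3) / 2)) := by
  obtain ⟨m, hmdef⟩ : ∃ m, m = n - g := ⟨n - g, rfl⟩
  rw [← hmdef]
  have hm : n = m + g := by omega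
  have hm3 : 3 ≤ m := by omega
  have hg1 : 1 ≤ g := by omega
  have hpow := two_pow_split g hg1
  have hp1 : 1 ≤ 2 ^ (g - 1) := Nat.one_le_two_pow
  have hp2 : 2 ≤ 2 ^ (g - 1) := by
    calc (2:ℕ) = 2 ^ 1 := rfl
    _ ≤ 2 ^ (g - 1) := Nat.pow_le_pow_right (by norm_num) (by omega)
  have h2g2 : 2 ≤ 2 ^ g := by omega
  refine ⟨fun hbig => ⟨fun heven => ?_, fun hodd => ?_⟩,
    fun hsmall => ⟨fun heven => ?_, fun hodd => ?_⟩⟩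
  · -- big, even
    obtain ⟨k, hk⟩ := heven
    have h2c : 2 * ((m + 2 ^ g - 2) / 2) = m + 2 ^ g - 2 := by omega
    rw [setDist_formula hm hm3 hg1 (c₁ := (m + 2 ^ g - 2) / 2) (c₂ := (m + 2 ^ g - 2) / 2)
      (by omega) le_rfl (by omega) (fun v => core_big_even hm hm3 hg1 hbig ⟨k, hk⟩)]
    omega
  · -- big, odd
    obtain ⟨k, hk⟩ := hodd
    have h2c : 2 * ((m + 2 ^ g - 3) / 2) = m + 2 ^ g - 3 := by omega
    rw [setDist_formula hm hm3 hg1 (c₁ := (m + 2 ^ g - 3) / 2) (c₂ := (m + 2 ^ g - 3) / 2 + 1)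
      (by omega) (by omega) (by omega) (fun v => core_big_odd hm hm3 hg2 hbig ⟨k, hk⟩)]
    omega
  · -- small, even
    obtain ⟨k, hk⟩ := heven
    rw [setDist_formula hm hm3 hg1 (c₁ := m - 1) (c₂ := m - 1)
      (by omega) le_rfl (by omega) (fun v => core_small hm hm3 hg1 (by omega))]
    omega
  · -- small, odd
    obtain ⟨k, hk⟩ := hodd
    rw [setDist_formula hm hm3 hg1 (c₁ := m - 1) (c₂ := m - 1)
      (by omega) le_rfl (by omega) (fun v => core_small hm hm3 hg1 (by omega))]
    omega

end PSaux

/-- The distance between the center and the subtree core of `P_{n-g,g}`. -/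
theorem dist_center_subtreeCore_pathStar (n g : ℕ) (hn : 5 ≤ n) (hg2 : 2 ≤ g)
    (hg : g ≤ n - 3) :
    (2 ^ g + 1 ≤ n - g →
      (Even (n - g) → setDist (pathStar n g) (_root_.center (pathStar n g))
          (subtreeCore (pathStar n g)) = 2 ^ (g - 1) - 1) ∧
      (Odd (n - g) → setDist (pathStar n g) (_root_.center (pathStar n g))
          (subtreeCore (pathStar n g)) = 2 ^ (g - 1) - 2)) ∧
    (n - g < 2 ^ g + 1 →
      (Even (n - g) → setDist (pathStar n g) (_root_.center (pathStar n g))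
          (subtreeCore (pathStar n g)) = (n - g - 2) / 2) ∧
      (Odd (n - g) → setDist (pathStar n g) (_root_.center (pathStar n g))
          (subtreeCore (pathStar n g)) = (n - g - 3) / 2)) := by
  exact PSaux.main n g hn hg2 hg
end

section
/- For every tree T on n ≥ 5 vertices, there exists a path-star tree P_{n−g,g} on n vertices (for some 2 ≤ g ≤ n−3) such that the distance between center and subtree core satisfies d_{P_{n−g,g}}(C, S_c) ≥ d_T(C, S_c). -/
open SimpleGraph

set_option linter.unusedSectionVars false

namespace AuxProof

variable {V : Type}

/-- Along any walk from a `P`-vertex to a non-`P`-vertex there is a crossing edge. -/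
lemma walk_cross {G : SimpleGraph V} (P : V → Prop) :
    ∀ {x y : V} (w : G.Walk x y), P x → ¬ P y →
      ∃ a b, G.Adj a b ∧ P a ∧ ¬ P b ∧ a ∈ w.support ∧ b ∈ w.support := by
  intro x y w
  induction w with
  | nil => intro h h'; exact absurd h h'
  | @cons x v y h p ih =>
    intro hx hy
    by_cases hq : P v
    · obtain ⟨a, b, hab, ha, hb, has, hbs⟩ := ih hq hy
      exact ⟨a, b, hab, ha, hb, by simp [has], by simp [hbs]⟩
    · exact ⟨x, v, h, hx, hq, by simp, by simp [Walk.start_mem_support]⟩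

/-- A monotone map between induced subgraphs. -/
def induceHomOfLE (G : SimpleGraph V) {S T : Set V} (h : S ⊆ T) :
    G.induce S →g G.induce T where
  toFun := fun x => ⟨x.1, h x.2⟩
  map_rel' := fun hab => by simpa using hab

lemma reachable_induce_of_le {G : SimpleGraph V} {S T : Set V} (h : S ⊆ T)
    {a b : ↥S} (hr : (G.induce S).Reachable a b) :
    (G.induce T).Reachable ⟨a.1, h a.2⟩ ⟨b.1, h b.2⟩ :=
  hr.map (induceHomOfLE G h)

lemma support_induce_reachable {G : SimpleGraph V} :
    ∀ {x y : V} (w : G.Walk x y) (z : V) (hz : z ∈ w.support),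
      (G.induce {t | t ∈ w.support}).Reachable ⟨x, w.start_mem_support⟩ ⟨z, hz⟩ := by
  intro x y w
  induction w with
  | nil =>
    intro z hz
    simp only [Walk.support_nil, List.mem_singleton] at hz
    subst hz
    rfl
  | @cons x v y h p ih =>
    intro z hz
    have hsub : {t | t ∈ p.support} ⊆ {t | t ∈ (Walk.cons h p).support} := by
      intro t ht; simp only [Walk.support_cons, Set.mem_setOf_eq, List.mem_cons]
      exact Or.inr ht
    have hadjxv : (G.induce {t | t ∈ (Walk.cons h p).support}).Adj
        ⟨x, (Walk.cons h p).start_mem_support⟩ ⟨v, hsub p.start_mem_support⟩ := by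
      simpa using h
    rcases List.mem_cons.mp (by simpa [Walk.support_cons] using hz) with hzx | hzp
    · subst hzx; rfl
    · exact hadjxv.reachable.trans (reachable_induce_of_le hsub (ih z hzp))

lemma support_induce_connected {G : SimpleGraph V} {x y : V} (w : G.Walk x y) :
    (G.induce {t | t ∈ w.support}).Connected := by
  rw [SimpleGraph.connected_iff]
  refine ⟨fun a b => ?_, ⟨⟨x, w.start_mem_support⟩⟩⟩
  have ha := support_induce_reachable w a.1 a.2
  have hb := support_induce_reachable w b.1 b.2
  exact ha.symm.trans hb

lemma dist_split [DecidableEq V] {G : SimpleGraph V} {u v y : V} (w : G.Walk u v) (hw : w.length = G.dist u v)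
    (hy : y ∈ w.support) : G.dist u y + G.dist y v = G.dist u v := by
  have h1 := SimpleGraph.dist_le (w.takeUntil y hy)
  have h2 := SimpleGraph.dist_le (w.dropUntil y hy)
  have h3 : (w.takeUntil y hy).length + (w.dropUntil y hy).length = w.length := by
    rw [← Walk.length_append, Walk.take_spec]
  obtain ⟨p1, hp1⟩ := SimpleGraph.Reachable.exists_walk_length_eq_dist ⟨w.takeUntil y hy⟩
  obtain ⟨p2, hp2⟩ := SimpleGraph.Reachable.exists_walk_length_eq_dist ⟨w.dropUntil y hy⟩
  have h4 := SimpleGraph.dist_le (p1.append p2)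
  rw [Walk.length_append, hp1, hp2] at h4
  omega

section Cut

variable [Fintype V] [DecidableEq V] {G : SimpleGraph V} {s v1 : V}

/-- The side of the cut at edge `(s,v1)` containing `s`. -/
def AClass (G : SimpleGraph V) (s v1 : V) : Set V :=
  {x | (G \ SimpleGraph.fromEdgeSet {s(s, v1)}).Reachable s x}

lemma s_mem_A : s ∈ AClass G s v1 := SimpleGraph.Reachable.refl _

lemma cut_cross (hbr : ¬ (G \ SimpleGraph.fromEdgeSet {s(s, v1)}).Reachable s v1)
    {u w : V} (hadj' : G.Adj u w) (hu : u ∈ AClass G s v1) (hw : w ∉ AClass G s v1) :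
    u = s ∧ w = v1 := by
  by_cases he : s(u, w) = s(s, v1)
  · rw [Sym2.eq_iff] at he
    rcases he with h | ⟨h1, h2⟩
    · exact h
    · exact absurd (h1 ▸ hu) hbr
  · have hadj2 : (G \ SimpleGraph.fromEdgeSet {s(s, v1)}).Adj u w := by
      rw [SimpleGraph.sdiff_adj, SimpleGraph.fromEdgeSet_adj]
      exact ⟨hadj', fun hc => he hc.1⟩
    exact absurd (hu.trans hadj2.reachable) hw

variable (hconn : G.Connected) (hadj : G.Adj s v1)
  (hbr : ¬ (G \ SimpleGraph.fromEdgeSet {s(s, v1)}).Reachable s v1)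

include hbr in
lemma mem_A_of_conn {S : Set V} (hS : (G.induce S).Connected) (hs : s ∈ S) (hv : v1 ∉ S) :
    S ⊆ AClass G s v1 := by
  intro x hx
  by_contra hxA
  obtain ⟨w⟩ := hS.preconnected ⟨s, hs⟩ ⟨x, hx⟩
  obtain ⟨a, b, hab, ha, hb, -, hbs⟩ :=
    walk_cross (fun t : ↥S => t.1 ∈ AClass G s v1) w s_mem_A hxA
  have : a.1 = s ∧ b.1 = v1 := cut_cross hbr (by simpa using hab) ha hb
  exact hv (this.2 ▸ b.2)

include hbr in
lemma not_mem_A_of_conn {S : Set V} (hS : (G.induce S).Connected) (hv : v1 ∈ S) (hs : s ∉ S) :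
    ∀ x ∈ S, x ∉ AClass G s v1 := by
  intro x hx hxA
  obtain ⟨w⟩ := hS.preconnected ⟨v1, hv⟩ ⟨x, hx⟩
  obtain ⟨a, b, hab, ha, hb, -, -⟩ :=
    walk_cross (fun t : ↥S => t.1 ∉ AClass G s v1) w hbr (not_not.mpr hxA)
  have : b.1 = s ∧ a.1 = v1 :=
    cut_cross hbr (G.adj_symm (by simpa using hab)) (not_not.mp hb) ha
  exact hs (this.1 ▸ b.2)

include hbr in
lemma geo_crossing {x y : V} (hx : x ∈ AClass G s v1) (hy : y ∉ AClass G s v1)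
    (w : G.Walk x y) : s ∈ w.support ∧ v1 ∈ w.support := by
  obtain ⟨a, b, hab, ha, hb, has, hbs⟩ :=
    walk_cross (fun t : V => t ∈ AClass G s v1) w hx hy
  obtain ⟨rfl, rfl⟩ := cut_cross hbr hab ha hb
  exact ⟨has, hbs⟩

include hconn hadj hbr in
lemma dist_cross {x y : V} (hx : x ∈ AClass G s v1) (hy : y ∉ AClass G s v1) :
    G.dist x y = G.dist x s + 1 + G.dist v1 y := by
  obtain ⟨w, hw⟩ := hconn.exists_walk_length_eq_dist x y
  have hsupp := geo_crossing hbr hx hy w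
  have h1 := dist_split w hw hsupp.1
  obtain ⟨w2, hw2⟩ := hconn.exists_walk_length_eq_dist s y
  have hsupp2 := geo_crossing hbr s_mem_A hy w2
  have h2 := dist_split w2 hw2 hsupp2.2
  have h3 : G.dist s v1 = 1 := SimpleGraph.dist_eq_one_iff_adj.mpr hadj
  omega

include hconn hadj hbr in
lemma distA {x : V} (hx : x ∈ AClass G s v1) : G.dist x v1 = G.dist x s + 1 := by
  have := dist_cross hconn hadj hbr hx hbr
  simpa [SimpleGraph.dist_self] using this

include hconn hadj hbr in
lemma distB {y : V} (hy : y ∉ AClass G s v1) : G.dist s y = 1 + G.dist v1 y := by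
  have := dist_cross hconn hadj hbr s_mem_A hy
  simpa [SimpleGraph.dist_self] using this

include hconn hadj hbr in
lemma supp_subset_B {x y : V} (hx : x ∉ AClass G s v1) (hy : y ∉ AClass G s v1)
    (w : G.Walk x y) (hw : w.length = G.dist x y) : ∀ z ∈ w.support, z ∉ AClass G s v1 := by
  intro z hz hzA
  have h1 := dist_split w hw hz
  have h2 := dist_cross hconn hadj hbr hzA hx
  have h3 := dist_cross hconn hadj hbr hzA hy
  have h4 := hconn.dist_triangle (u := x) (v := v1) (w := y)
  have c1 : G.dist x z = G.dist z x := SimpleGraph.dist_comm ..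
  have c2 : G.dist x v1 = G.dist v1 x := SimpleGraph.dist_comm ..
  omega

include hconn hadj hbr in
lemma supp_subset_A {x y : V} (hx : x ∈ AClass G s v1) (hy : y ∈ AClass G s v1)
    (w : G.Walk x y) (hw : w.length = G.dist x y) : ∀ z ∈ w.support, z ∈ AClass G s v1 := by
  intro z hz
  by_contra hzA
  have h1 := dist_split w hw hz
  have h2 := dist_cross hconn hadj hbr hx hzA
  have h3 := dist_cross hconn hadj hbr hy hzA
  have h4 := hconn.dist_triangle (u := x) (v := s) (w := y)
  have c1 : G.dist z y = G.dist y z := SimpleGraph.dist_comm ..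
  have c2 : G.dist s y = G.dist y s := SimpleGraph.dist_comm ..
  omega

lemma numSubtrees_split (G : SimpleGraph V) (v t : V) :
    numSubtrees G v =
      {S : Set V | v ∈ S ∧ (G.induce S).Connected ∧ t ∈ S}.ncard +
      {S : Set V | v ∈ S ∧ (G.induce S).Connected ∧ t ∉ S}.ncard := by
  have hu : {S : Set V | {v} ⊆ S ∧ (G.induce S).Connected} =
      {S : Set V | v ∈ S ∧ (G.induce S).Connected ∧ t ∈ S} ∪
      {S : Set V | v ∈ S ∧ (G.induce S).Connected ∧ t ∉ S} := by
    ext S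
    simp only [Set.mem_setOf_eq, Set.mem_union, Set.singleton_subset_iff]
    tauto
  rw [numSubtrees, numSubtreesOn, hu,
    Set.ncard_union_eq ?_ (Set.toFinite _) (Set.toFinite _)]
  rw [Set.disjoint_left]
  rintro S ⟨-, -, h⟩ ⟨-, -, h'⟩
  exact h' h

lemma b_le_a (hcore : s ∈ subtreeCore G) :
    {S : Set V | v1 ∈ S ∧ (G.induce S).Connected ∧ s ∉ S}.ncard ≤
    {S : Set V | s ∈ S ∧ (G.induce S).Connected ∧ v1 ∉ S}.ncard := by
  have h := hcore v1
  rw [numSubtrees_split G v1 s, numSubtrees_split G s v1] at h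
  have he : {S : Set V | v1 ∈ S ∧ (G.induce S).Connected ∧ s ∈ S} =
      {S : Set V | s ∈ S ∧ (G.induce S).Connected ∧ v1 ∈ S} := by
    ext S
    simp only [Set.mem_setOf_eq]
    tauto
  rw [he] at h
  omega

include hconn hadj hbr in
lemma q_le_b :
    (AClass G s v1)ᶜ.ncard ≤
      {S : Set V | v1 ∈ S ∧ (G.induce S).Connected ∧ s ∉ S}.ncard := by
  have hv1 : v1 ∉ AClass G s v1 := hbr
  set f : V → Set V :=
    fun x => {t | t ∈ (hconn.exists_walk_length_eq_dist v1 x).choose.support} with hf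
  apply Set.ncard_le_ncard_of_injOn f ?_ ?_ (Set.toFinite _)
  · intro x hx
    have spec := (hconn.exists_walk_length_eq_dist v1 x).choose_spec
    refine ⟨Walk.start_mem_support _, support_induce_connected _, fun hs => ?_⟩
    exact (supp_subset_B hconn hadj hbr hv1 hx _ spec s hs) s_mem_A
  · intro x hx y hy hxy
    have specx := (hconn.exists_walk_length_eq_dist v1 x).choose_spec
    have specy := (hconn.exists_walk_length_eq_dist v1 y).choose_spec
    have hyfx : y ∈ f x := by
      rw [hxy]; exact Walk.end_mem_support _
    have hxfy : x ∈ f y := by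
      rw [← hxy]; exact Walk.end_mem_support _
    have h1 := dist_split _ specx hyfx
    have h2 := dist_split _ specy hxfy
    have c1 : G.dist y x = G.dist x y := SimpleGraph.dist_comm ..
    have h0 : G.dist x y = 0 := by omega
    exact ((hconn.preconnected x y).dist_eq_zero_iff).mp h0

lemma ncard_powerset (C : Set V) : {T : Set V | T ⊆ C}.ncard = 2 ^ C.ncard := by
  have himg : {T : Set V | T ⊆ C} = Set.range (fun T : Set ↥C => (Subtype.val '' T)) := by
    ext T
    simp only [Set.mem_setOf_eq, Set.mem_range]
    constructor
    · intro hT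
      refine ⟨Subtype.val ⁻¹' T, ?_⟩
      rw [Subtype.image_preimage_coe]
      exact Set.inter_eq_self_of_subset_right hT
    · rintro ⟨U, rfl⟩
      rintro t ⟨u, -, rfl⟩
      exact u.2
  rw [← Nat.card_coe_set_eq, himg,
    Nat.card_range_of_injective (Set.image_injective.mpr Subtype.val_injective)]
  haveI : Fintype ↥C := (Set.toFinite C).fintype
  rw [Nat.card_eq_fintype_card, Fintype.card_set, ← Nat.card_coe_set_eq,
    Nat.card_eq_fintype_card]

include hbr in
lemma a_le_pow :
    {S : Set V | s ∈ S ∧ (G.induce S).Connected ∧ v1 ∉ S}.ncard ≤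
      2 ^ ((AClass G s v1).ncard - 1) := by
  have h1 : {S : Set V | s ∈ S ∧ (G.induce S).Connected ∧ v1 ∉ S} ⊆
      {S : Set V | s ∈ S ∧ S ⊆ AClass G s v1} := by
    rintro S ⟨hs, hc, hv⟩
    exact ⟨hs, mem_A_of_conn hbr hc hs hv⟩
  refine le_trans (Set.ncard_le_ncard h1 (Set.toFinite _)) ?_
  have h2 : ∀ S ∈ {S : Set V | s ∈ S ∧ S ⊆ AClass G s v1},
      S \ {s} ∈ {T : Set V | T ⊆ AClass G s v1 \ {s}} := by
    rintro S ⟨hs, hsub⟩ x ⟨hx1, hx2⟩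
    exact ⟨hsub hx1, hx2⟩
  have h3 : Set.InjOn (fun S => S \ {s}) {S : Set V | s ∈ S ∧ S ⊆ AClass G s v1} := by
    rintro S1 ⟨h1s, -⟩ S2 ⟨h2s, -⟩ heq
    simp only at heq
    ext x
    by_cases hx : x = s
    · subst hx; simp [h1s, h2s]
    · constructor
      · intro hxS
        have : x ∈ S1 \ {s} := ⟨hxS, hx⟩
        rw [heq] at this
        exact this.1
      · intro hxS
        have : x ∈ S2 \ {s} := ⟨hxS, hx⟩
        rw [← heq] at this
        exact this.1
  refine le_trans (Set.ncard_le_ncard_of_injOn _ h2 h3 (Set.toFinite _)) ?_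
  rw [ncard_powerset]
  have h4 := Set.ncard_diff_singleton_add_one (s_mem_A (G := G) (s := s) (v1 := v1))
    (Set.toFinite _)
  have h5 : (AClass G s v1 \ {s}).ncard = (AClass G s v1).ncard - 1 := by omega
  rw [h5]

end Cut

section TreeSide

variable [Fintype V] [DecidableEq V] {G : SimpleGraph V}

lemma dist_le_ecc (x v : V) : G.dist x v ≤ ecc G v :=
  Finset.le_sup (f := fun u => G.dist u v) (Finset.mem_univ x)

lemma center_nonempty [Nonempty V] (G : SimpleGraph V) : ∃ c, c ∈ _root_.center G := by
  obtain ⟨c, -, hc⟩ := Finset.exists_min_image Finset.univ (ecc G) ⟨Classical.arbitrary V,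
    Finset.mem_univ _⟩
  exact ⟨c, fun u => hc u (Finset.mem_univ u)⟩

lemma subtreeCore_nonempty [Nonempty V] (G : SimpleGraph V) : ∃ s, s ∈ subtreeCore G := by
  obtain ⟨s, -, hs⟩ := Finset.exists_max_image Finset.univ (numSubtrees G) ⟨Classical.arbitrary V,
    Finset.mem_univ _⟩
  exact ⟨s, fun u => hs u (Finset.mem_univ u)⟩

lemma setDist_attained [Nonempty V] (G : SimpleGraph V) :
    ∃ c ∈ _root_.center G, ∃ s ∈ subtreeCore G,
      G.dist c s = setDist G (_root_.center G) (subtreeCore G) := by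
  obtain ⟨c, hc⟩ := center_nonempty G
  obtain ⟨s, hs⟩ := subtreeCore_nonempty G
  have hne : {d | ∃ a ∈ _root_.center G, ∃ b ∈ subtreeCore G, G.dist a b = d}.Nonempty :=
    ⟨G.dist c s, c, hc, s, hs, rfl⟩
  exact Nat.sInf_mem hne

lemma setDist_le {A B : Set V} {c s : V} (hc : c ∈ A) (hs : s ∈ B) :
    setDist G A B ≤ G.dist c s :=
  Nat.sInf_le ⟨c, hc, s, hs, rfl⟩

theorem tree_bound (hT : G.IsTree) (h5 : 5 ≤ Fintype.card V)
    (hk : 1 ≤ setDist G (_root_.center G) (subtreeCore G)) :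
    2 * setDist G (_root_.center G) (subtreeCore G) + 4 ≤ Fintype.card V ∧
    2 * setDist G (_root_.center G) (subtreeCore G) + 2 ≤
      2 ^ (Fintype.card V - (2 * setDist G (_root_.center G) (subtreeCore G) + 2)) := by
  classical
  haveI : Nonempty V := Fintype.card_pos_iff.mp (by omega)
  have hconn : G.Connected := hT.isConnected
  set k := setDist G (_root_.center G) (subtreeCore G) with hkdef
  obtain ⟨c, hcC, s, hsS, hdist⟩ := setDist_attained G
  have hcs_ne : c ≠ s := by
    intro h
    rw [h, SimpleGraph.dist_self] at hdist
    omega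
  obtain ⟨p, hp⟩ := hconn.exists_walk_length_eq_dist s c
  have hdsc : G.dist s c = k := by rw [SimpleGraph.dist_comm]; exact hdist
  set v1 := p.getVert 1 with hv1def
  have hplenpos : 0 < p.length := by rw [hp, hdsc]; omega
  have hadj : G.Adj s v1 := by
    have := p.adj_getVert_succ hplenpos
    simpa using this
  have hv1supp : v1 ∈ p.support := by
    rw [SimpleGraph.Walk.mem_support_iff_exists_getVert]
    exact ⟨1, rfl, by omega⟩
  have hsplit := dist_split p hp hv1supp
  have hd_sv1 : G.dist s v1 = 1 := SimpleGraph.dist_eq_one_iff_adj.mpr hadj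
  have hd_v1c : G.dist v1 c = k - 1 := by omega
  have hbr : ¬(G \ SimpleGraph.fromEdgeSet {s(s, v1)}).Reachable s v1 :=
    ((SimpleGraph.isBridge_iff).mp
      ((SimpleGraph.isAcyclic_iff_forall_adj_isBridge.mp hT.IsAcyclic) hadj))
  have hsA : s ∈ AClass G s v1 := s_mem_A
  have hv1A : v1 ∉ AClass G s v1 := hbr
  have hcA : c ∉ AClass G s v1 := by
    intro hcA
    have h1 := distA hconn hadj hbr hcA
    have h2 : G.dist c v1 = G.dist v1 c := SimpleGraph.dist_comm ..
    have h3 : G.dist c s = k := hdist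
    omega
  have hq_b := q_le_b hconn hadj hbr
  have hb_a := b_le_a (v1 := v1) hsS
  have ha_pow := a_le_pow hbr
  -- Main claim : q ≥ 2k+1
  have hq : 2 * k + 1 ≤ (AClass G s v1)ᶜ.ncard := by
    by_cases hA1 : ∃ x ∈ AClass G s v1, x ≠ s
    · obtain ⟨x, hxA, hxs⟩ := hA1
      set r := ecc G c with hrdef
      have hr_ge : k + 1 ≤ r := by
        have h1 := dist_cross hconn hadj hbr hxA hcA
        have h2 : 0 < G.dist x s := (hconn.preconnected x s).pos_dist_of_ne hxs
        have h3 := dist_le_ecc (G := G) x c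
        omega
      obtain ⟨p2, hp2⟩ := hconn.exists_walk_length_eq_dist c s
      set c1 := p2.getVert 1 with hc1def
      have hp2pos : 0 < p2.length := by rw [hp2, hdist]; omega
      have hadj_cc1 : G.Adj c c1 := by
        have := p2.adj_getVert_succ hp2pos
        simpa using this
      have hc1supp : c1 ∈ p2.support := by
        rw [SimpleGraph.Walk.mem_support_iff_exists_getVert]
        exact ⟨1, rfl, by omega⟩
      have hsplit2 := dist_split p2 hp2 hc1supp
      have hd_cc1 : G.dist c c1 = 1 := SimpleGraph.dist_eq_one_iff_adj.mpr hadj_cc1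
      have hd_c1s : G.dist c1 s = k - 1 := by
        have : G.dist c s = k := hdist
        omega
      have hbr2 : ¬(G \ SimpleGraph.fromEdgeSet {s(c1, c)}).Reachable c1 c :=
        ((SimpleGraph.isBridge_iff).mp
          ((SimpleGraph.isAcyclic_iff_forall_adj_isBridge.mp hT.IsAcyclic) hadj_cc1.symm))
      have hcA2 : c ∉ AClass G c1 c := hbr2
      have hsA2 : s ∈ AClass G c1 c := by
        by_contra hs2
        have h1 := distB hconn hadj_cc1.symm hbr2 hs2
        have h2 : G.dist c1 s = k - 1 := hd_c1s
        have h3 : G.dist c s = k := hdist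
        omega
      set Bf := Finset.univ.filter (fun x => x ∉ AClass G c1 c) with hBfdef
      have hBfne : Bf.Nonempty := ⟨c, by simp [hBfdef, hcA2]⟩
      set M := Bf.sup (fun x => G.dist x c) with hMdef
      obtain ⟨w', hw'Bf, hw'M⟩ := Finset.exists_mem_eq_sup Bf hBfne (fun x => G.dist x c)
      have hw'A2 : w' ∉ AClass G c1 c := by
        have := hw'Bf
        simp [hBfdef] at this
        exact this
      have heccc1 : ecc G c1 ≤ max (r - 1) (M + 1) := by
        apply Finset.sup_le
        intro u _
        by_cases hu : u ∈ AClass G c1 c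
        · have h1 := distA hconn hadj_cc1.symm hbr2 hu
          have h2 : G.dist u c ≤ r := dist_le_ecc (G := G) u c
          have : G.dist u c1 ≤ r - 1 := by omega
          exact le_trans this (le_max_left _ _)
        · have h1 := distB hconn hadj_cc1.symm hbr2 hu
          have h2 : G.dist u c ≤ M := by
            have : u ∈ Bf := by simp [hBfdef, hu]
            exact Finset.le_sup (f := fun x => G.dist x c) this
          have h3 : G.dist u c1 = G.dist c1 u := SimpleGraph.dist_comm ..
          have h4 : G.dist c u = G.dist u c := SimpleGraph.dist_comm ..
          have : G.dist u c1 ≤ M + 1 := by omega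
          exact le_trans this (le_max_right _ _)
      have hM_ge : r - 1 ≤ M := by
        have h1 : r ≤ ecc G c1 := hcC c1
        have h2 := le_trans h1 heccc1
        by_contra hcon
        rw [max_eq_left (by omega : M + 1 ≤ r - 1)] at h2
        omega
      by_cases hM : k + 1 ≤ M
      · -- the large-side case
        obtain ⟨p3, hp3path, hp3len⟩ := (hconn.preconnected c w').exists_path_of_dist
        have hp3suppB2 := supp_subset_B hconn hadj_cc1.symm hbr2 hcA2 hw'A2 p3 hp3len
        obtain ⟨p4, hp4path, hp4len⟩ := (hconn.preconnected v1 c).exists_path_of_dist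
        have hYA2 : ∀ z ∈ p4.support, z ≠ c → z ∈ AClass G c1 c := by
          intro z hz hzc
          by_contra hz2
          have h1 := dist_cross hconn hadj_cc1.symm hbr2 hsA2 hz2
          have h2 := dist_split p4 hp4len hz
          have h3 := hconn.dist_triangle (u := s) (v := v1) (w := z)
          have h4 : G.dist z c = 0 := by
            have c1' : G.dist v1 z = G.dist z v1 := SimpleGraph.dist_comm ..
            have c2' : G.dist s z = G.dist z s := SimpleGraph.dist_comm ..
            have c3' : G.dist z c = G.dist c z := SimpleGraph.dist_comm ..
            have c4' : G.dist s c1 = G.dist c1 s := SimpleGraph.dist_comm ..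
            omega
          exact hzc (((hconn.preconnected z c).dist_eq_zero_iff).mp h4)
        have hA2c_sub : ∀ y, y ∉ AClass G c1 c → y ∉ AClass G s v1 := by
          intro y hy2 hyA
          have h1 := distA hconn hadj hbr hyA
          have h2 := dist_cross hconn hadj_cc1.symm hbr2 hsA2 hy2
          have h3 := hconn.dist_triangle (u := y) (v := c) (w := v1)
          have c1' : G.dist c v1 = G.dist v1 c := SimpleGraph.dist_comm ..
          have c2' : G.dist y s = G.dist s y := SimpleGraph.dist_comm ..
          have c3' : G.dist y c = G.dist c y := SimpleGraph.dist_comm ..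
          have c4' : G.dist s c1 = G.dist c1 s := SimpleGraph.dist_comm ..
          omega
        have hYAc := supp_subset_B hconn hadj hbr hv1A hcA p4 hp4len
        classical
        set X : Finset V := p3.support.toFinset with hXdef
        set Y : Finset V := p4.support.toFinset.erase c with hYdef
        have hXcard : X.card = M + 1 := by
          rw [hXdef, List.toFinset_card_of_nodup hp3path.support_nodup,
            SimpleGraph.Walk.length_support, hp3len]
          have : G.dist c w' = G.dist w' c := SimpleGraph.dist_comm ..
          omega
        have hYcard : Y.card = k - 1 := by
          rw [hYdef, Finset.card_erase_of_mem (by simp [SimpleGraph.Walk.end_mem_support]),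
            List.toFinset_card_of_nodup hp4path.support_nodup,
            SimpleGraph.Walk.length_support, hp4len, hd_v1c]
          omega
        have hdisj : Disjoint X Y := by
          rw [Finset.disjoint_left]
          intro z hzX hzY
          have hz3 : z ∈ p3.support := by simpa [hXdef] using hzX
          have hz4 : z ∈ p4.support ∧ z ≠ c := by
            constructor
            · have := Finset.mem_of_mem_erase (hYdef ▸ hzY)
              simpa using this
            · exact Finset.ne_of_mem_erase (hYdef ▸ hzY)
          exact (hp3suppB2 z hz3) (hYA2 z hz4.1 hz4.2)
        have hsub : (↑(X ∪ Y) : Set V) ⊆ (AClass G s v1)ᶜ := by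
          intro z hz
          rcases Finset.mem_union.mp hz with hzX | hzY
          · exact hA2c_sub z (hp3suppB2 z (by simpa [hXdef] using hzX))
          · have hz4 : z ∈ p4.support := by
              have := Finset.mem_of_mem_erase (hYdef ▸ hzY)
              simpa using this
            exact hYAc z hz4
        have hcount : (M + 1) + (k - 1) ≤ (AClass G s v1)ᶜ.ncard := by
          have h1 : ((↑(X ∪ Y) : Set V)).ncard ≤ (AClass G s v1)ᶜ.ncard :=
            Set.ncard_le_ncard hsub (Set.toFinite _)
          rw [Set.ncard_coe_finset, Finset.card_union_of_disjoint hdisj, hXcard, hYcard] at h1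
          exact h1
        omega
      · -- c1 is a closer center vertex: contradiction
        exfalso
        have hecc_le : ecc G c1 ≤ r := by
          refine le_trans heccc1 ?_
          exact max_le (by omega) (by omega)
        have hc1C : c1 ∈ _root_.center G := by
          intro u
          exact le_trans hecc_le (hcC u)
        have hle := setDist_le (G := G) hc1C hsS
        rw [← hkdef, hd_c1s] at hle
        omega
    · -- A = {s} : contradiction with counts
      exfalso
      push_neg at hA1
      have haub : {S : Set V | s ∈ S ∧ (G.induce S).Connected ∧ v1 ∉ S}.ncard ≤ 1 := by
        have hsub : {S : Set V | s ∈ S ∧ (G.induce S).Connected ∧ v1 ∉ S} ⊆ {({s} : Set V)} := by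
          rintro S ⟨hs, hc, hv⟩
          have hSA := mem_A_of_conn hbr hc hs hv
          have : S = {s} := by
            apply Set.eq_singleton_iff_unique_mem.mpr
            exact ⟨hs, fun x hx => hA1 x (hSA hx)⟩
          simp [this]
        calc {S : Set V | s ∈ S ∧ (G.induce S).Connected ∧ v1 ∉ S}.ncard
            ≤ ({({s} : Set V)} : Set (Set V)).ncard := Set.ncard_le_ncard hsub (Set.toFinite _)
          _ = 1 := Set.ncard_singleton _
      have hqlb : Fintype.card V - 1 ≤ (AClass G s v1)ᶜ.ncard := by
        have hsub2 : ({s} : Set V)ᶜ ⊆ (AClass G s v1)ᶜ := by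
          intro x hx hxA
          exact hx (hA1 x hxA)
        have h1 : (({s} : Set V)ᶜ).ncard ≤ (AClass G s v1)ᶜ.ncard :=
          Set.ncard_le_ncard hsub2 (Set.toFinite _)
        have h2 : ({s} : Set V).ncard + (({s} : Set V)ᶜ).ncard = Fintype.card V := by
          rw [Set.ncard_add_ncard_compl, Nat.card_eq_fintype_card]
        rw [Set.ncard_singleton] at h2
        omega
      omega
  -- final numeric chain
  have hApos : 1 ≤ (AClass G s v1).ncard :=
    (Set.ncard_pos (Set.toFinite _)).mpr ⟨s, hsA⟩
  have hcardsplit : (AClass G s v1).ncard + (AClass G s v1)ᶜ.ncard = Fintype.card V := by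
    rw [Set.ncard_add_ncard_compl, Nat.card_eq_fintype_card]
  set t := (AClass G s v1).ncard - 1 with htdef
  have hpow_t : 2 * k + 1 ≤ 2 ^ t := by
    calc 2 * k + 1 ≤ (AClass G s v1)ᶜ.ncard := hq
      _ ≤ _ := hq_b
      _ ≤ _ := hb_a
      _ ≤ 2 ^ t := ha_pow
  have ht2 : 2 ≤ t := by
    by_contra ht
    interval_cases t <;> omega
  have hpow_t2 : 2 * k + 2 ≤ 2 ^ t := by
    have : 2 ^ t = 2 * 2 ^ (t - 1) := by
      rw [← pow_succ']
      congr 1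
      omega
    omega
  have hcard_ge : 2 * k + 4 ≤ Fintype.card V := by
    have h2t : t + 1 ≤ (AClass G s v1).ncard := by omega
    have h2pow : t + 1 ≤ 2 ^ t := Nat.succ_le_of_lt (Nat.lt_two_pow_self (n := t))
    omega
  refine ⟨hcard_ge, ?_⟩
  have hexp : t ≤ Fintype.card V - (2 * k + 2) := by omega
  calc 2 * k + 2 ≤ 2 ^ t := hpow_t2
    _ ≤ 2 ^ (Fintype.card V - (2 * k + 2)) := Nat.pow_le_pow_right (by omega) hexp

end TreeSide

section PathStar

variable {n g m : ℕ}

lemma ps_adj (hm : n - g = m) {x y : Fin n} :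
    (pathStar n g).Adj x y ↔ x.val ≠ y.val ∧
      ((x.val + 1 = y.val ∧ y.val < m) ∨ (y.val + 1 = x.val ∧ x.val < m) ∨
       (x.val = m - 1 ∧ m ≤ y.val) ∨ (y.val = m - 1 ∧ m ≤ x.val)) := by
  subst hm
  rw [pathStar, SimpleGraph.fromRel_adj]
  rw [Fin.ne_iff_vne]
  tauto

lemma ps_adj_succ (hm : n - g = m) {i : ℕ} (hi : i + 1 < m) (h1 : i < n) (h2 : i + 1 < n) :
    (pathStar n g).Adj ⟨i, h1⟩ ⟨i + 1, h2⟩ := by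
  rw [ps_adj hm]
  exact ⟨show i ≠ i + 1 by omega, Or.inl ⟨rfl, hi⟩⟩

lemma ps_adj_pendant (hm : n - g = m) (hm1 : 1 ≤ m) {j : ℕ} (hj : m ≤ j) (h2 : j < n) (h1 : m - 1 < n) :
    (pathStar n g).Adj ⟨m - 1, h1⟩ ⟨j, h2⟩ := by
  rw [ps_adj hm]
  exact ⟨show m - 1 ≠ j by omega, Or.inr (Or.inr (Or.inl ⟨rfl, hj⟩))⟩

/-- Reaching the hub `m-1` in a graph that contains the path-star step edges above a cutoff. -/
lemma ps_reach_hub' (H : SimpleGraph (Fin n)) (c : ℕ) (hm1 : 1 ≤ m) (hmn : m ≤ n)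
    (hstep : ∀ i (h1 : i < n) (h2 : i + 1 < n), c ≤ i → i + 1 < m →
      H.Adj ⟨i, h1⟩ ⟨i + 1, h2⟩)
    (hpend : ∀ p (hp : m ≤ p) (h : p < n) (h1 : m - 1 < n), H.Adj ⟨m - 1, h1⟩ ⟨p, h⟩) :
    ∀ v : Fin n, (c ≤ v.val ∨ m ≤ v.val) → H.Reachable v ⟨m - 1, by omega⟩ := by
  have hpath : ∀ d i (h1 : i < n), c ≤ i → i + d = m - 1 →
      H.Reachable ⟨i, h1⟩ ⟨m - 1, by omega⟩ := by
    intro d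
    induction d with
    | zero =>
      intro i h1 hci hi
      have : i = m - 1 := by omega
      subst this
      rfl
    | succ d ih =>
      intro i h1 hci hi
      have hi1 : i + 1 < m := by omega
      have h2 : i + 1 < n := by omega
      exact ((hstep i h1 h2 hci hi1).reachable).trans (ih (i + 1) h2 (by omega) (by omega))
  intro v hv
  rcases hv with hv | hv
  · by_cases hvm : v.val < m
    · have : v = ⟨v.val, v.isLt⟩ := by ext; rfl
      rw [this]
      exact hpath (m - 1 - v.val) v.val v.isLt hv (by omega)
    · have : v = ⟨v.val, v.isLt⟩ := by ext; rfl
      rw [this]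
      exact ((hpend v.val (by omega) v.isLt (by omega)).symm).reachable
  · have : v = ⟨v.val, v.isLt⟩ := by ext; rfl
    rw [this]
    exact ((hpend v.val hv v.isLt (by omega)).symm).reachable

lemma ps_connected (hm : n - g = m) (hm1 : 1 ≤ m) (hmn : m ≤ n) :
    (pathStar n g).Connected := by
  rw [SimpleGraph.connected_iff]
  refine ⟨fun u v => ?_, ⟨⟨0, by omega⟩⟩⟩
  have h := ps_reach_hub' (pathStar n g) 0 hm1 hmn
    (fun i h1 h2 _ hi => ps_adj_succ hm hi h1 h2)
    (fun p hp h h1 => ps_adj_pendant hm hm1 hp h h1)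
  exact (h u (by omega)).trans (h v (by omega)).symm

lemma ps_walk_lip (hm : n - g = m) {x y : Fin n} (w : (pathStar n g).Walk x y) :
    min x.val m ≤ min y.val m + w.length := by
  induction w with
  | nil => simp
  | @cons a b c h p ih =>
    rw [ps_adj hm] at h
    have : min a.val m ≤ min b.val m + 1 := by omega
    simp only [SimpleGraph.Walk.length_cons]
    omega

lemma ps_dist_lip (hm : n - g = m) (hm1 : 1 ≤ m) (hmn : m ≤ n) (x y : Fin n) :
    min x.val m ≤ min y.val m + (pathStar n g).dist x y := by
  obtain ⟨w, hw⟩ := (ps_connected hm hm1 hmn).exists_walk_length_eq_dist x y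
  have := ps_walk_lip hm w
  omega

lemma ps_dist_path_le (hm : n - g = m) (hm1 : 1 ≤ m) (hmn : m ≤ n)
    {i j : ℕ} (hij : i ≤ j) (hj : j < m) (h1 : i < n) (h2 : j < n) :
    (pathStar n g).dist ⟨i, h1⟩ ⟨j, h2⟩ ≤ j - i := by
  have hconn := ps_connected hm hm1 hmn
  have key : ∀ d i (h1 : i < n) (hd : i + d = j),
      (pathStar n g).dist ⟨i, h1⟩ ⟨j, h2⟩ ≤ d := by
    intro d
    induction d with
    | zero =>
      intro i h1 hd
      have : i = j := by omega
      subst this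
      simp [SimpleGraph.dist_self]
    | succ d ih =>
      intro i h1 hd
      have h3 : i + 1 < n := by omega
      have htri := hconn.dist_triangle (u := (⟨i, h1⟩ : Fin n)) (v := ⟨i + 1, h3⟩)
        (w := ⟨j, h2⟩)
      have hadj : (pathStar n g).dist ⟨i, h1⟩ ⟨i + 1, h3⟩ = 1 :=
        SimpleGraph.dist_eq_one_iff_adj.mpr (ps_adj_succ hm (by omega) h1 h3)
      have := ih (i + 1) h3 (by omega)
      omega
  exact key (j - i) i h1 (by omega)

lemma ps_dist_pend_le (hm : n - g = m) (hm1 : 1 ≤ m) (hmn : m ≤ n)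
    {j i : ℕ} (hj : m ≤ j) (hi : i < m) (h2 : j < n) (h1 : i < n) :
    (pathStar n g).dist ⟨j, h2⟩ ⟨i, h1⟩ ≤ 1 + (m - 1 - i) := by
  have hconn := ps_connected hm hm1 hmn
  have h3 : m - 1 < n := by omega
  have htri := hconn.dist_triangle (u := (⟨j, h2⟩ : Fin n)) (v := ⟨m - 1, h3⟩)
    (w := ⟨i, h1⟩)
  have hadj : (pathStar n g).dist ⟨j, h2⟩ ⟨m - 1, h3⟩ = 1 :=
    SimpleGraph.dist_eq_one_iff_adj.mpr (ps_adj_pendant hm hm1 hj h2 h3).symm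
  have hpath : (pathStar n g).dist ⟨m - 1, h3⟩ ⟨i, h1⟩ ≤ m - 1 - i := by
    have := ps_dist_path_le hm hm1 hmn (i := i) (j := m - 1) (by omega) (by omega) h1 h3
    have hcomm : (pathStar n g).dist ⟨m - 1, h3⟩ ⟨i, h1⟩ =
        (pathStar n g).dist ⟨i, h1⟩ ⟨m - 1, h3⟩ := SimpleGraph.dist_comm ..
    omega
  omega

end PathStar

section PSCenter

variable {n g m k : ℕ}

lemma ps_ecc_le (hm : n - g = m) (hmk : m = 2 * k + 2) (hmn2 : m + 2 ≤ n) :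
    ecc (pathStar n g) ⟨k + 1, by omega⟩ ≤ k + 1 := by
  have hm1 : 1 ≤ m := by omega
  have hmn : m ≤ n := by omega
  have hc0 : k + 1 < n := by omega
  apply Finset.sup_le
  intro x _
  have hxeta : x = ⟨x.val, x.isLt⟩ := by ext; rfl
  by_cases hx : x.val < m
  · by_cases hx2 : x.val ≤ k + 1
    · have h := ps_dist_path_le hm hm1 hmn (i := x.val) (j := k + 1) hx2 (by omega)
        x.isLt (by omega)
      rw [hxeta]
      omega
    · have h := ps_dist_path_le hm hm1 hmn (i := k + 1) (j := x.val) (by omega) hx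
        (by omega) x.isLt
      have hcomm : (pathStar n g).dist ⟨x.val, x.isLt⟩ ⟨k + 1, hc0⟩ =
          (pathStar n g).dist ⟨k + 1, hc0⟩ ⟨x.val, x.isLt⟩ := SimpleGraph.dist_comm ..
      rw [hxeta]
      omega
  · have h := ps_dist_pend_le hm hm1 hmn (j := x.val) (i := k + 1) (by omega) (by omega)
      x.isLt (by omega)
    rw [hxeta]
    omega

lemma ps_ecc_ge_min (hm : n - g = m) (hmk : m = 2 * k + 2) (hmn2 : m + 2 ≤ n) (u : Fin n) :
    min u.val m ≤ ecc (pathStar n g) u := by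
  have hm1 : 1 ≤ m := by omega
  have hmn : m ≤ n := by omega
  have h := ps_dist_lip hm hm1 hmn u ⟨0, by omega⟩
  have h2 := dist_le_ecc (G := pathStar n g) ⟨0, by omega⟩ u
  have hcomm : (pathStar n g).dist u ⟨0, by omega⟩ =
      (pathStar n g).dist ⟨0, by omega⟩ u := SimpleGraph.dist_comm ..
  simp only [Fin.val_mk] at h ⊢
  omega

lemma ps_ecc_ge_low (hm : n - g = m) (hmk : m = 2 * k + 2) (hmn2 : m + 2 ≤ n) (u : Fin n)
    (hu : u.val ≤ k) : k + 2 ≤ ecc (pathStar n g) u := by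
  have hm1 : 1 ≤ m := by omega
  have hmn : m ≤ n := by omega
  have hpd : m < n := by omega
  have h := ps_dist_lip hm hm1 hmn ⟨m, hpd⟩ u
  have h2 := dist_le_ecc (G := pathStar n g) ⟨m, hpd⟩ u
  simp only [Fin.val_mk] at h
  omega

lemma ps_center_mem (hm : n - g = m) (hmk : m = 2 * k + 2) (hmn2 : m + 2 ≤ n) :
    (⟨k + 1, by omega⟩ : Fin n) ∈ _root_.center (pathStar n g) := by
  intro u
  refine le_trans (ps_ecc_le hm hmk hmn2) ?_
  by_cases hu : u.val ≤ k
  · have := ps_ecc_ge_low hm hmk hmn2 u hu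
    omega
  · have := ps_ecc_ge_min hm hmk hmn2 u
    omega

lemma ps_center_sub (hm : n - g = m) (hmk : m = 2 * k + 2) (hmn2 : m + 2 ≤ n)
    {v : Fin n} (hv : v ∈ _root_.center (pathStar n g)) : v = ⟨k + 1, by omega⟩ := by
  have h1 : ecc (pathStar n g) v ≤ k + 1 :=
    le_trans (hv ⟨k + 1, by omega⟩) (ps_ecc_le hm hmk hmn2)
  by_cases hlow : v.val ≤ k
  · have := ps_ecc_ge_low hm hmk hmn2 v hlow
    omega
  · by_cases hhigh : k + 2 ≤ v.val
    · have := ps_ecc_ge_min hm hmk hmn2 v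
      have : k + 2 ≤ min v.val m := by omega
      omega
    · ext
      simp only [Fin.val_mk]
      omega

end PSCenter

section PSCut

variable {n g m j : ℕ}

lemma ps_del_adj_side (hm : n - g = m) (hj : j + 2 ≤ m) (hjn : j + 1 < n) (hjn0 : j < n)
    {x y : Fin n}
    (h : ((pathStar n g) \ SimpleGraph.fromEdgeSet
        {s((⟨j + 1, hjn⟩ : Fin n), (⟨j, hjn0⟩ : Fin n))}).Adj x y) :
    (j + 1 ≤ x.val ↔ j + 1 ≤ y.val) := by
  rw [SimpleGraph.sdiff_adj, SimpleGraph.fromEdgeSet_adj] at h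
  obtain ⟨h1, h2⟩ := h
  have hne : s(x, y) ≠ s((⟨j + 1, hjn⟩ : Fin n), (⟨j, hjn0⟩ : Fin n)) := by
    intro hc
    exact h2 ⟨by simpa using hc, h1.ne⟩
  have hnv : ¬(x.val = j + 1 ∧ y.val = j) ∧ ¬(x.val = j ∧ y.val = j + 1) := by
    constructor
    · rintro ⟨ha, hb⟩
      exact hne (Sym2.eq_iff.mpr (Or.inl ⟨Fin.ext ha, Fin.ext hb⟩))
    · rintro ⟨ha, hb⟩
      exact hne (Sym2.eq_iff.mpr (Or.inr ⟨Fin.ext ha, Fin.ext hb⟩))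
  rw [ps_adj hm] at h1
  obtain ⟨hxy, hcase⟩ := h1
  obtain ⟨hnv1, hnv2⟩ := hnv
  rcases hcase with ⟨h3, h4⟩ | ⟨h3, h4⟩ | ⟨h3, h4⟩ | ⟨h3, h4⟩
  · constructor <;> intro <;> by_contra <;> [skip; skip] <;> omega
  · constructor <;> intro <;> by_contra <;> omega
  · omega
  · omega

lemma ps_del_reach_side (hm : n - g = m) (hj : j + 2 ≤ m) (hjn : j + 1 < n) (hjn0 : j < n)
    {x y : Fin n}
    (h : ((pathStar n g) \ SimpleGraph.fromEdgeSet
        {s((⟨j + 1, hjn⟩ : Fin n), (⟨j, hjn0⟩ : Fin n))}).Reachable x y) :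
    (j + 1 ≤ x.val ↔ j + 1 ≤ y.val) := by
  obtain ⟨w⟩ := h
  induction w with
  | nil => rfl
  | @cons a b c hab p ih =>
    exact (ps_del_adj_side hm hj hjn hjn0 hab).trans ih

lemma ps_bridge (hm : n - g = m) (hj : j + 2 ≤ m) (hjn : j + 1 < n) (hjn0 : j < n) :
    ¬((pathStar n g) \ SimpleGraph.fromEdgeSet
        {s((⟨j + 1, hjn⟩ : Fin n), (⟨j, hjn0⟩ : Fin n))}).Reachable
      ⟨j + 1, hjn⟩ ⟨j, hjn0⟩ := by
  intro h
  have := ps_del_reach_side hm hj hjn hjn0 h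
  simp only [Fin.val_mk] at this
  omega

lemma ps_AClass (hm : n - g = m) (hj : j + 2 ≤ m) (hmn : m ≤ n) (hjn : j + 1 < n)
    (hjn0 : j < n) :
    AClass (pathStar n g) ⟨j + 1, hjn⟩ ⟨j, hjn0⟩ = {x : Fin n | j + 1 ≤ x.val} := by
  set e := s((⟨j + 1, hjn⟩ : Fin n), (⟨j, hjn0⟩ : Fin n)) with hedef
  set H := (pathStar n g) \ SimpleGraph.fromEdgeSet {e} with hHdef
  ext x
  constructor
  · intro hx
    have := ps_del_reach_side hm hj hjn hjn0 hx
    simp only [Fin.val_mk] at this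
    exact this.mp (by omega)
  · intro hx
    have hm1 : 1 ≤ m := by omega
    have hnotmem : ∀ a b : Fin n, j + 1 ≤ a.val → j + 1 ≤ b.val → s(a, b) ≠ e := by
      intro a b ha hb hc
      rw [hedef, Sym2.eq_iff] at hc
      rcases hc with ⟨h1, h2⟩ | ⟨h1, h2⟩
      · have := congrArg Fin.val h2; simp at this; omega
      · have := congrArg Fin.val h1; simp at this; omega
    have hstep : ∀ i (h1 : i < n) (h2 : i + 1 < n), j + 1 ≤ i → i + 1 < m →
        H.Adj ⟨i, h1⟩ ⟨i + 1, h2⟩ := by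
      intro i h1 h2 hi him
      rw [hHdef, SimpleGraph.sdiff_adj, SimpleGraph.fromEdgeSet_adj]
      refine ⟨ps_adj_succ hm him h1 h2, ?_⟩
      rintro ⟨hmem, -⟩
      exact hnotmem ⟨i, h1⟩ ⟨i + 1, h2⟩ hi (show j + 1 ≤ i + 1 by omega) (Set.mem_singleton_iff.mp hmem)
    have hpend : ∀ p (hp : m ≤ p) (h : p < n) (h1 : m - 1 < n), H.Adj ⟨m - 1, h1⟩ ⟨p, h⟩ := by
      intro p hp h h1
      rw [hHdef, SimpleGraph.sdiff_adj, SimpleGraph.fromEdgeSet_adj]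
      refine ⟨ps_adj_pendant hm hm1 hp h h1, ?_⟩
      rintro ⟨hmem, -⟩
      exact hnotmem ⟨m - 1, h1⟩ ⟨p, h⟩ (show j + 1 ≤ m - 1 by omega) (show j + 1 ≤ p by omega) (Set.mem_singleton_iff.mp hmem)
    have hr := ps_reach_hub' H (j + 1) hm1 hmn hstep hpend
    have h1 := hr ⟨j + 1, hjn⟩ (Or.inl (by simp))
    have h2 := hr x (Or.inl hx)
    exact h1.trans h2.symm

end PSCut

section PSB

variable {n g m j : ℕ}

lemma ps_b_le (hm : n - g = m) (hj : j + 2 ≤ m) (hmn : m ≤ n) (hjn : j + 1 < n)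
    (hjn0 : j < n) :
    {S : Set (Fin n) | (⟨j, hjn0⟩ : Fin n) ∈ S ∧ ((pathStar n g).induce S).Connected ∧
      (⟨j + 1, hjn⟩ : Fin n) ∉ S}.ncard ≤ j + 1 := by
  classical
  have hbr := ps_bridge hm hj hjn hjn0
  set F := {S : Set (Fin n) | (⟨j, hjn0⟩ : Fin n) ∈ S ∧ ((pathStar n g).induce S).Connected ∧
      (⟨j + 1, hjn⟩ : Fin n) ∉ S} with hFdef
  have hSsub : ∀ S ∈ F, ∀ x ∈ S, x.val ≤ j := by
    intro S hS x hx
    have h := not_mem_A_of_conn (G := pathStar n g) (s := ⟨j + 1, hjn⟩) (v1 := ⟨j, hjn0⟩)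
      hbr hS.2.1 hS.1 hS.2.2 x hx
    rw [ps_AClass hm hj hmn hjn hjn0] at h
    simp only [Set.mem_setOf_eq, not_le] at h
    omega
  set mu : Set (Fin n) → ℕ := fun S => sInf {i : ℕ | ∃ h : i < n, (⟨i, h⟩ : Fin n) ∈ S}
    with hmudef
  have hkey : ∀ S ∈ F, S = {x : Fin n | mu S ≤ x.val ∧ x.val ≤ j} := by
    intro S hS
    have hne : {i : ℕ | ∃ h : i < n, (⟨i, h⟩ : Fin n) ∈ S}.Nonempty := ⟨j, hjn0, hS.1⟩
    have hmem := Nat.sInf_mem hne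
    obtain ⟨hmun, hmuS⟩ := hmem
    ext z
    constructor
    · intro hz
      refine ⟨Nat.sInf_le ⟨z.isLt, ?_⟩, hSsub S hS z hz⟩
      have : z = ⟨z.val, z.isLt⟩ := by ext; rfl
      rw [← this]; exact hz
    · rintro ⟨hz1, hz2⟩
      by_cases hzx : z.val = mu S
      · have : z = ⟨mu S, hmun⟩ := by ext; simp [hzx]
        rw [this]; exact hmuS
      · -- z strictly between the minimum and j
        obtain ⟨w⟩ := hS.2.1.preconnected ⟨⟨mu S, hmun⟩, hmuS⟩ ⟨⟨j, hjn0⟩, hS.1⟩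
        obtain ⟨a, b, hab, ha, hb, -, hbs⟩ :=
          walk_cross (fun t : ↥S => t.1.val < z.val) w (by simp; omega) (by simp; omega)
        have hab' : (pathStar n g).Adj a.1 b.1 := by simpa using hab
        rw [ps_adj hm] at hab'
        have haj : a.1.val ≤ j := hSsub S hS a.1 a.2
        have hbj : b.1.val ≤ j := hSsub S hS b.1 b.2
        rcases hab'.2 with ⟨h3, h4⟩ | ⟨h3, h4⟩ | ⟨h3, h4⟩ | ⟨h3, h4⟩
        · have : b.1 = z := by ext; omega
          exact this ▸ b.2
        · omega
        · omega
        · omega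
  have hmaps : ∀ S ∈ F, mu S ∈ Set.Iic j := by
    intro S hS
    exact Nat.sInf_le ⟨hjn0, hS.1⟩
  have hinj : Set.InjOn mu F := by
    intro S1 h1 S2 h2 heq
    rw [hkey S1 h1, hkey S2 h2, heq]
  calc F.ncard ≤ (Set.Iic j).ncard :=
        Set.ncard_le_ncard_of_injOn mu hmaps hinj (Set.finite_Iic j)
    _ = j + 1 := by rw [← Finset.coe_Iic, Set.ncard_coe_finset, Nat.card_Iic]

end PSB

section PSA

variable {n g m j : ℕ}

lemma ps_pend_ncard (hm : n - g = m) (hg : g ≤ n) (hmn : m ≤ n) :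
    {x : Fin n | m ≤ x.val}.ncard = g := by
  have hlow : {x : Fin n | x.val < m} = Set.range (Fin.castLE hmn) := by
    ext x
    simp only [Set.mem_setOf_eq, Set.mem_range]
    constructor
    · intro hx
      exact ⟨⟨x.val, hx⟩, by ext; rfl⟩
    · rintro ⟨y, rfl⟩
      exact y.isLt
  have hlowcard : {x : Fin n | x.val < m}.ncard = m := by
    rw [← Nat.card_coe_set_eq, hlow,
      Nat.card_range_of_injective (Fin.castLE_injective hmn), Nat.card_eq_fintype_card,
      Fintype.card_fin]
  have hcompl : {x : Fin n | m ≤ x.val} = {x : Fin n | x.val < m}ᶜ := by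
    ext x
    simp [not_lt]
  have hadd := Set.ncard_add_ncard_compl {x : Fin n | x.val < m} (Set.toFinite _)
    (Set.toFinite _)
  rw [Nat.card_eq_fintype_card, Fintype.card_fin] at hadd
  rw [hcompl]
  omega

lemma ps_interval_conn (hm : n - g = m) (hj2 : j + 2 ≤ m) (hmn : m ≤ n)
    {J : Set (Fin n)} (hJ : ∀ x ∈ J, m ≤ x.val) :
    ((pathStar n g).induce ({x : Fin n | j + 1 ≤ x.val ∧ x.val ≤ m - 1} ∪ J)).Connected := by
  set S := {x : Fin n | j + 1 ≤ x.val ∧ x.val ≤ m - 1} ∪ J with hSdef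
  have hm1n : m - 1 < n := by omega
  have hhub : (⟨m - 1, hm1n⟩ : Fin n) ∈ S := Or.inl ⟨by simp; omega, by simp⟩
  rw [SimpleGraph.connected_iff]
  refine ⟨?_, ⟨⟨⟨m - 1, hm1n⟩, hhub⟩⟩⟩
  have hpath : ∀ d i (h1 : i < n) (hi : j + 1 ≤ i) (hd : i + d = m - 1)
      (hmem : (⟨i, h1⟩ : Fin n) ∈ S),
      ((pathStar n g).induce S).Reachable ⟨⟨i, h1⟩, hmem⟩ ⟨⟨m - 1, hm1n⟩, hhub⟩ := by
    intro d
    induction d with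
    | zero =>
      intro i h1 hi hd hmem
      have : (⟨⟨i, h1⟩, hmem⟩ : ↥S) = ⟨⟨m - 1, hm1n⟩, hhub⟩ := by
        apply Subtype.ext
        apply Fin.ext
        simpa using by omega
      rw [this]
    | succ d ih =>
      intro i h1 hi hd hmem
      have h2 : i + 1 < n := by omega
      have hmem2 : (⟨i + 1, h2⟩ : Fin n) ∈ S := Or.inl ⟨by simp; omega, by simp; omega⟩
      have hadj : ((pathStar n g).induce S).Adj ⟨⟨i, h1⟩, hmem⟩ ⟨⟨i + 1, h2⟩, hmem2⟩ := by
        simpa using ps_adj_succ hm (by omega) h1 h2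
      exact hadj.reachable.trans (ih (i + 1) h2 (by omega) (by omega) hmem2)
  have hall : ∀ z : ↥S, ((pathStar n g).induce S).Reachable z ⟨⟨m - 1, hm1n⟩, hhub⟩ := by
    rintro ⟨z, hz⟩
    have hzeta : (⟨z, hz⟩ : ↥S) = ⟨⟨z.val, z.isLt⟩, by
        have : z = ⟨z.val, z.isLt⟩ := by ext; rfl
        rw [← this]; exact hz⟩ := by
      apply Subtype.ext; ext; rfl
    have hz2 : z ∈ S := hz
    rcases hz2 with hint | hJm
    · rw [hzeta]
      exact hpath (m - 1 - z.val) z.val z.isLt hint.1 (by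
        have := hint.2
        omega) _
    · have hadj : ((pathStar n g).induce S).Adj ⟨z, hz⟩ ⟨⟨m - 1, hm1n⟩, hhub⟩ := by
        have h := (ps_adj_pendant hm (by omega) (hJ z hJm) z.isLt hm1n).symm
        have : z = ⟨z.val, z.isLt⟩ := by ext; rfl
        simpa [← this] using h
      exact hadj.reachable
  intro a b
  exact (hall a).trans (hall b).symm

lemma ps_a_ge (hm : n - g = m) (hj2 : j + 2 ≤ m) (hmn : m ≤ n) (hg : g ≤ n)
    (hjn : j + 1 < n) (hjn0 : j < n) :
    2 ^ g ≤ {S : Set (Fin n) | (⟨j + 1, hjn⟩ : Fin n) ∈ S ∧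
      ((pathStar n g).induce S).Connected ∧ (⟨j, hjn0⟩ : Fin n) ∉ S}.ncard := by
  classical
  set Pend := {x : Fin n | m ≤ x.val} with hPdef
  set Phi : Set (Fin n) → Set (Fin n) :=
    fun J => {x : Fin n | j + 1 ≤ x.val ∧ x.val ≤ m - 1} ∪ J with hPhidef
  have hmaps : ∀ J ∈ {J : Set (Fin n) | J ⊆ Pend}, Phi J ∈
      {S : Set (Fin n) | (⟨j + 1, hjn⟩ : Fin n) ∈ S ∧
        ((pathStar n g).induce S).Connected ∧ (⟨j, hjn0⟩ : Fin n) ∉ S} := by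
    intro J hJ
    refine ⟨Or.inl ⟨by simp, by simp; omega⟩, ?_, ?_⟩
    · exact ps_interval_conn hm hj2 hmn (fun x hx => hJ hx)
    · rintro (⟨h1, h2⟩ | hJm)
      · simp at h1
      · have := hJ hJm
        simp [hPdef] at this
        omega
  have hinj : Set.InjOn Phi {J : Set (Fin n) | J ⊆ Pend} := by
    intro J1 hJ1 J2 hJ2 heq
    ext x
    constructor
    · intro hx
      have hxv : m ≤ x.val := hJ1 hx
      have : x ∈ Phi J1 := Or.inr hx
      rw [heq] at this
      rcases this with ⟨-, h2⟩ | h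
      · omega
      · exact h
    · intro hx
      have hxv : m ≤ x.val := hJ2 hx
      have : x ∈ Phi J2 := Or.inr hx
      rw [← heq] at this
      rcases this with ⟨-, h2⟩ | h
      · omega
      · exact h
  have hcard : {J : Set (Fin n) | J ⊆ Pend}.ncard = 2 ^ g := by
    rw [ncard_powerset, ps_pend_ncard hm hg hmn]
  calc 2 ^ g = {J : Set (Fin n) | J ⊆ Pend}.ncard := hcard.symm
    _ ≤ _ := Set.ncard_le_ncard_of_injOn Phi hmaps hinj (Set.toFinite _)

end PSA

section PSFinal

variable {n g m j : ℕ}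

lemma ps_numSubtrees_lt (hm : n - g = m) (hj2 : j + 2 ≤ m) (hmn : m ≤ n) (hg : g ≤ n)
    (hpow : m ≤ 2 ^ g) (hjn : j + 1 < n) (hjn0 : j < n) :
    numSubtrees (pathStar n g) ⟨j, hjn0⟩ < numSubtrees (pathStar n g) ⟨j + 1, hjn⟩ := by
  rw [numSubtrees_split (pathStar n g) ⟨j, hjn0⟩ ⟨j + 1, hjn⟩,
    numSubtrees_split (pathStar n g) ⟨j + 1, hjn⟩ ⟨j, hjn0⟩]
  have he : {S : Set (Fin n) | (⟨j, hjn0⟩ : Fin n) ∈ S ∧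
      ((pathStar n g).induce S).Connected ∧ (⟨j + 1, hjn⟩ : Fin n) ∈ S} =
      {S : Set (Fin n) | (⟨j + 1, hjn⟩ : Fin n) ∈ S ∧
      ((pathStar n g).induce S).Connected ∧ (⟨j, hjn0⟩ : Fin n) ∈ S} := by
    ext S
    simp only [Set.mem_setOf_eq]
    tauto
  have hb := ps_b_le hm hj2 hmn hjn hjn0
  have ha := ps_a_ge hm hj2 hmn hg hjn hjn0
  rw [he]
  omega

lemma ps_core_high (hm : n - g = m) (hm2 : 2 ≤ m) (hmn : m ≤ n) (hg : g ≤ n)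
    (hpow : m ≤ 2 ^ g) {v : Fin n} (hv : v ∈ subtreeCore (pathStar n g)) :
    m - 1 ≤ v.val := by
  by_contra hlow
  push_neg at hlow
  have hj2 : v.val + 2 ≤ m := by omega
  have hjn : v.val + 1 < n := by omega
  have hlt := ps_numSubtrees_lt hm hj2 hmn hg hpow hjn v.isLt
  have hle := hv ⟨v.val + 1, hjn⟩
  have hlt' : numSubtrees (pathStar n g) v <
      numSubtrees (pathStar n g) ⟨v.val + 1, hjn⟩ := hlt
  omega

theorem ps_setDist_ge (n k : ℕ) (hk : 1 ≤ k) (hn : 2 * k + 4 ≤ n)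
    (hpow : 2 * k + 2 ≤ 2 ^ (n - (2 * k + 2))) :
    k ≤ setDist (pathStar n (n - (2 * k + 2)))
      (_root_.center (pathStar n (n - (2 * k + 2))))
      (subtreeCore (pathStar n (n - (2 * k + 2)))) := by
  set g := n - (2 * k + 2) with hgdef
  set m := 2 * k + 2 with hmdef
  have hm : n - g = m := by omega
  have hmn2 : m + 2 ≤ n := by omega
  have hmn : m ≤ n := by omega
  have hg : g ≤ n := by omega
  have hpow' : m ≤ 2 ^ g := hpow
  have hmk : m = 2 * k + 2 := rfl
  haveI : Nonempty (Fin n) := ⟨⟨0, by omega⟩⟩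
  obtain ⟨s₀, hs₀⟩ := subtreeCore_nonempty (pathStar n g)
  have hc₀ := ps_center_mem hm hmk hmn2
  refine le_csInf ⟨(pathStar n g).dist ⟨k + 1, by omega⟩ s₀,
    ⟨k + 1, by omega⟩, hc₀, s₀, hs₀, rfl⟩ ?_
  rintro d ⟨a, haC, b, hbS, rfl⟩
  have ha := ps_center_sub hm hmk hmn2 haC
  have hbv : m - 1 ≤ b.val := ps_core_high hm (by omega) hmn hg hpow' hbS
  subst ha
  have hlip := ps_dist_lip hm (by omega) hmn b ⟨k + 1, by omega⟩
  have hcomm : (pathStar n g).dist b ⟨k + 1, by omega⟩ =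
      (pathStar n g).dist ⟨k + 1, by omega⟩ b := SimpleGraph.dist_comm ..
  simp only [Fin.val_mk] at hlip
  omega

end PSFinal

end AuxProof


/-- For every tree on `n ≥ 5` vertices there is a path-star tree `P_{n-g,g}` whose
center–subtree-core distance is at least that of the given tree. -/
theorem exists_pathStar_dist_center_subtreeCore_ge (n : ℕ) (hn : 5 ≤ n)
    {V : Type} [Fintype V] [DecidableEq V] (G : SimpleGraph V)
    (hcard : Fintype.card V = n) (hT : G.IsTree) :
    ∃ g, 2 ≤ g ∧ g ≤ n - 3 ∧
      setDist G (_root_.center G) (subtreeCore G)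
        ≤ setDist (pathStar n g) (_root_.center (pathStar n g)) (subtreeCore (pathStar n g)) := by
  classical
  by_cases hk0 : setDist G (_root_.center G) (subtreeCore G) = 0
  · exact ⟨n - 3, by omega, le_refl _, by rw [hk0]; exact Nat.zero_le _⟩
  · have hk1 : 1 ≤ setDist G (_root_.center G) (subtreeCore G) := by omega
    have hb := AuxProof.tree_bound hT (by rw [hcard]; exact hn) hk1
    rw [hcard] at hb
    obtain ⟨hb1, hb2⟩ := hb
    refine ⟨n - (2 * setDist G (_root_.center G) (subtreeCore G) + 2), by omega, by omega, ?_⟩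
    exact AuxProof.ps_setDist_ge n (setDist G (_root_.center G) (subtreeCore G)) hk1 hb1 hb2
end
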